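/- arXiv:2111.11568 — 6 statements merged into one kernel-verified Lean document; each statement's English description precedes it below -/
import Mathlib

section
/- Let G be a finite group that is unramified over a nontrivial abelian normal subgroup N. Then either [N,G] = N or [N,G] = G′ (the commutator subgroup of G). In particular, N ⊆ G′ or G′ ⊆ N. -/
open scoped BigOperators

noncomputable def charInner (G : Type) [Group G] (φ ψ : G → ℂ) : ℂ :=
  (Nat.card G : ℂ)⁻¹ * ∑ᶠ g, φ g * (starRingEnd ℂ) (ψ g)

/-- `χ` is the character of some irreducible complex representation of `G`. -/
def IsIrrChar (G : Type) [Group G] (χ : G → ℂ) : Prop :=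
  ∃ ρ : FDRep ℂ G, CategoryTheory.Simple ρ ∧ FDRep.character ρ = χ

/-- A class function is multiplicity free if it pairs with each irreducible
character with multiplicity at most one. -/
def MultFree (G : Type) [Group G] (φ : G → ℂ) : Prop :=
  ∀ μ : G → ℂ, IsIrrChar G μ → charInner G φ μ = 0 ∨ charInner G φ μ = 1

/-- `G` is unramified over `N`: every irreducible character of `G` restricts to `N`
multiplicity-freely or as a multiple of the trivial character. -/
def UnramifiedOver (G : Type) [Group G] (N : Subgroup G) : Prop :=
  ∀ χ : G → ℂ, IsIrrChar G χ →
    MultFree N (fun n : N => χ n) ∨ ∀ n : N, χ n = χ 1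

def PseudoUnramifiedOver (G : Type) [Group G] (N : Subgroup G) : Prop :=
  ∀ μ : ↥N → ℂ, IsIrrChar ↥N μ →
    ∃ χ : G → ℂ, IsIrrChar G χ ∧ charInner ↥N (fun n : N => χ n) μ ≠ 0 ∧
      MultFree ↥N (fun n : N => χ n)

/-- The conjugate character `ᵍμ(n) = μ(g⁻¹ n g)`. -/
def conjChar {G : Type} [Group G] (N : Subgroup G) [hN : N.Normal] (g : G)
    (μ : ↥N → ℂ) : ↥N → ℂ :=
  fun n => μ ⟨g⁻¹ * ↑n * g, hN.conj_mem' ↑n n.2 g⟩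

lemma conjChar_mul {G : Type} [Group G] (N : Subgroup G) [N.Normal] (a b : G)
    (μ : ↥N → ℂ) : conjChar N (a * b) μ = conjChar N a (conjChar N b μ) := by
  funext n
  simp [conjChar, mul_assoc]

lemma conjChar_one {G : Type} [Group G] (N : Subgroup G) [N.Normal]
    (μ : ↥N → ℂ) : conjChar N 1 μ = μ := by
  funext n
  simp [conjChar]

/-- The inertia subgroup of μ. -/
def inertia {G : Type} [Group G] (N : Subgroup G) [N.Normal] (μ : ↥N → ℂ) :
    Subgroup G where
  carrier := {g | conjChar N g μ = μ}
  one_mem' := conjChar_one N μ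
  mul_mem' := by
    intro a b ha hb
    simp only [Set.mem_setOf_eq] at *
    rw [conjChar_mul, hb, ha]
  inv_mem' := by
    intro a ha
    simp only [Set.mem_setOf_eq] at *
    conv_lhs => rw [← ha]
    rw [← conjChar_mul, inv_mul_cancel, conjChar_one]

namespace Stmt6Aux
open CategoryTheory Module
open scoped commutatorElement
variable {G : Type} [Group G]

def Invt (V : FDRep ℂ G) (p : Submodule ℂ V) : Prop := ∀ (g : G), ∀ x ∈ p, V.ρ g x ∈ p

noncomputable def subRep (V : FDRep ℂ G) (p : Submodule ℂ V) (hp : Invt V p) : FDRep ℂ G :=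
  FDRep.of
    { toFun := fun g => (V.ρ g).restrict (fun x hx => hp g x hx)
      map_one' := by ext x; simp
      map_mul' := by intro a b; ext x; simp }

lemma subRep_ρ_apply (V : FDRep ℂ G) (p : Submodule ℂ V) (hp : Invt V p) (g : G)
    (x : ↥p) : ((subRep V p hp).ρ g) x = ⟨V.ρ g ↑x, hp g _ x.2⟩ := rfl

/-- inclusion as a morphism -/
noncomputable def subRepIncl (V : FDRep ℂ G) (p : Submodule ℂ V) (hp : Invt V p) :
    subRep V p hp ⟶ V :=
  ⟨FGModuleCat.ofHom p.subtype, by intro g; rfl⟩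

lemma subRepIncl_hom_apply (V : FDRep ℂ G) (p : Submodule ℂ V) (hp : Invt V p) (x : ↥p) :
    (subRepIncl V p hp).hom x = (x : V) := rfl

lemma hom_comm_apply {X Y : FDRep ℂ G} (f : X ⟶ Y) (g : G) (x : X) :
    f.hom (X.ρ g x) = Y.ρ g (f.hom x) :=
  LinearMap.congr_fun (congrArg (fun u => u.hom.hom) (f.comm g)) x

lemma mono_of_injective {X Y : FDRep ℂ G} (f : X ⟶ Y) (hf : Function.Injective f.hom) :
    Mono f := by
  constructor
  intro Z g h H
  apply Action.hom_ext
  apply FGModuleCat.hom_ext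
  apply LinearMap.ext
  intro z
  apply hf
  have := congrArg (fun (u : Z ⟶ Y) => u.hom z) H
  exact this

lemma hom_eq_zero_iff {X Y : FDRep ℂ G} (f : X ⟶ Y) : f = 0 ↔ f.hom = 0 := by
  constructor
  · rintro rfl; rfl
  · intro h; apply Action.hom_ext; simpa using h

lemma range_invt {X Y : FDRep ℂ G} (f : X ⟶ Y) : Invt Y (LinearMap.range f.hom.hom.hom) := by
  rintro g y ⟨x, rfl⟩
  exact ⟨X.ρ g x, hom_comm_apply f g x⟩

/-- If the underlying module is nontrivial and has no nontrivial invariant submodules,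
the representation is simple. -/
lemma simple_of (V : FDRep ℂ G) (hnt : Nontrivial V)
    (h : ∀ p : Submodule ℂ V, Invt V p → p = ⊥ ∨ p = ⊤) : Simple V := by
  constructor
  intro Y f hf
  constructor
  · intro hiso hf0
    obtain ⟨x, y, hxy⟩ := hnt
    apply hxy
    have h1 : 𝟙 V = (0 : V ⟶ V) := by
      rw [← IsIso.inv_hom_id f]
      rw [congrArg (CategoryStruct.comp (inv f)) hf0]
      simp
    have hx := congrArg (fun (u : V ⟶ V) => u.hom x) h1
    have hy := congrArg (fun (u : V ⟶ V) => u.hom y) h1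
    simpa using hx.trans hy.symm
  · intro hf0
    -- f is injective
    have hker : LinearMap.ker f.hom.hom.hom = ⊥ := by
      by_contra hk
      obtain ⟨x, hxk, hx0⟩ := Submodule.exists_mem_ne_zero_of_ne_bot (Ne.symm (ne_comm.mp hk))
      have hKinv : Invt Y (LinearMap.ker f.hom.hom.hom) := by
        intro g y hy
        have hy' : f.hom y = 0 := hy
        have : f.hom (Y.ρ g y) = V.ρ g (f.hom y) := hom_comm_apply f g y
        show f.hom (Y.ρ g y) = 0
        rw [this, hy', map_zero]
      -- inclusion composed with f is zero
      have hcomp : subRepIncl Y _ hKinv ≫ f = (0 : subRep Y _ hKinv ⟶ Y) ≫ f := by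
        apply Action.hom_ext
        apply FGModuleCat.hom_ext
        apply LinearMap.ext
        rintro ⟨z, hz⟩
        exact hz.trans (map_zero f.hom.hom.hom).symm
      have := (cancel_mono f).mp hcomp
      have h0 : (subRepIncl Y _ hKinv).hom ⟨x, hxk⟩ = 0 := by
        rw [this]; rfl
      exact hx0 h0
    have hinj : Function.Injective f.hom := by
      exact LinearMap.ker_eq_bot.mp hker
    have hsurj : Function.Surjective f.hom := by
      rcases h (LinearMap.range f.hom.hom.hom) (range_invt f) with hr | hr
      · exfalso
        apply hf0
        rw [hom_eq_zero_iff]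
        apply FGModuleCat.hom_ext
        apply LinearMap.ext
        intro x
        have : f.hom x ∈ LinearMap.range f.hom.hom.hom := ⟨x, rfl⟩
        rw [hr] at this
        exact (Submodule.mem_bot ℂ).mp this
      · exact LinearMap.range_eq_top.mp hr
    let e := LinearEquiv.ofBijective f.hom.hom.hom ⟨hinj, hsurj⟩
    have hcomm : ∀ (g : G) (v : V), e.symm (V.ρ g v) = Y.ρ g (e.symm v) := by
      intro g v
      apply hinj
      show f.hom _ = f.hom _
      rw [hom_comm_apply f g (e.symm v)]
      have h1 : f.hom (e.symm (V.ρ g v)) = V.ρ g v := e.apply_symm_apply _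
      have h2 : f.hom (e.symm v) = v := e.apply_symm_apply _
      rw [h1, h2]
    refine ⟨⟨⟨FGModuleCat.ofHom e.symm.toLinearMap, ?_⟩, ?_, ?_⟩⟩
    · intro g
      apply FGModuleCat.hom_ext
      apply LinearMap.ext
      intro v
      exact hcomm g v
    · apply Action.hom_ext; apply FGModuleCat.hom_ext; apply LinearMap.ext; intro y
      show e.symm (f.hom y) = y
      exact e.symm_apply_apply y
    · apply Action.hom_ext; apply FGModuleCat.hom_ext; apply LinearMap.ext; intro v
      show f.hom (e.symm v) = v
      exact e.apply_symm_apply v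

lemma nontrivial_of_simple (V : FDRep ℂ G) [Simple V] : Nontrivial V := by
  by_contra hn
  have hs : Subsingleton V := not_nontrivial_iff_subsingleton.mp hn
  apply id_nonzero V
  apply Action.hom_ext
  apply FGModuleCat.hom_ext
  apply LinearMap.ext
  intro x
  exact @Subsingleton.elim _ hs _ _

lemma invt_eq_bot_or_top (V : FDRep ℂ G) [Simple V] (p : Submodule ℂ V) (hp : Invt V p) :
    p = ⊥ ∨ p = ⊤ := by
  by_cases hpb : p = ⊥
  · exact Or.inl hpb
  right
  have hmono : Mono (subRepIncl V p hp) := mono_of_injective _ (Subtype.val_injective)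
  have hne : subRepIncl V p hp ≠ 0 := by
    obtain ⟨x, hxp, hx0⟩ := Submodule.exists_mem_ne_zero_of_ne_bot hpb
    intro h0
    apply hx0
    have := congrArg (fun (u : subRep V p hp ⟶ V) => u.hom ⟨x, hxp⟩) h0
    exact this
  have hiso : IsIso (subRepIncl V p hp) := (Simple.mono_isIso_iff_nonzero _).mpr hne
  -- surjectivity
  rw [Submodule.eq_top_iff']
  intro v
  have h1 : inv (subRepIncl V p hp) ≫ subRepIncl V p hp = 𝟙 V := IsIso.inv_hom_id _
  have := congrArg (fun (u : V ⟶ V) => u.hom v) h1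
  simp only [Action.comp_hom, Action.id_hom] at this
  have : (subRepIncl V p hp).hom ((inv (subRepIncl V p hp)).hom v) = v := this
  rw [← this]
  exact ((inv (subRepIncl V p hp)).hom v).2


lemma ρ_mul_apply (V : FDRep ℂ G) (a b : G) (x : V) :
    V.ρ (a * b) x = V.ρ a (V.ρ b x) := by rw [map_mul]; rfl

lemma ρ_inv_apply (V : FDRep ℂ G) (a : G) (x : V) :
    V.ρ a (V.ρ a⁻¹ x) = x := by
  rw [← ρ_mul_apply, mul_inv_cancel, map_one]; rfl

lemma exists_minimal_invt (V : FDRep ℂ G) :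
    ∀ (n : ℕ) (p : Submodule ℂ V), finrank ℂ p ≤ n → Invt V p → p ≠ ⊥ →
    ∃ q ≤ p, Invt V q ∧ q ≠ ⊥ ∧ (∀ r ≤ q, Invt V r → r = ⊥ ∨ r = q) := by
  intro n
  induction n with
  | zero =>
    intro p hp hpi hpb
    exfalso
    apply hpb
    have : finrank ℂ p = 0 := Nat.le_zero.mp hp
    exact Submodule.finrank_eq_zero.mp this
  | succ n ih =>
    intro p hp hpi hpb
    by_cases hmin : ∀ r ≤ p, Invt V r → r = ⊥ ∨ r = p
    · exact ⟨p, le_rfl, hpi, hpb, hmin⟩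
    · push_neg at hmin
      obtain ⟨r, hrp, hri, hrb, hrne⟩ := hmin
      have hlt : r < p := lt_of_le_of_ne hrp hrne
      have : finrank ℂ r < finrank ℂ p := Submodule.finrank_lt_finrank_of_lt hlt
      obtain ⟨q, hq1, hq2, hq3, hq4⟩ := ih r (by omega) hri hrb
      exact ⟨q, hq1.trans hrp, hq2, hq3, hq4⟩

/-- Maschke: invariant complement -/
lemma exists_invt_compl [Finite G] (V : FDRep ℂ G) (p : Submodule ℂ V) (hp : Invt V p) :
    ∃ q : Submodule ℂ V, Invt V q ∧ IsCompl p q := by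
  have := Fintype.ofFinite G
  obtain ⟨q₀, hq₀⟩ := Submodule.exists_isCompl p
  set π : V →ₗ[ℂ] V := p.subtype ∘ₗ Submodule.projectionOnto p q₀ hq₀ with hπ
  have hπp : ∀ x, π x ∈ p := fun x => (Submodule.projectionOnto p q₀ hq₀ x).2
  have hπid : ∀ x ∈ p, π x = x := by
    intro x hx
    simp [hπ, Submodule.projectionOnto_apply_left hq₀ ⟨x, hx⟩]
  set σ : V →ₗ[ℂ] V :=
    (Fintype.card G : ℂ)⁻¹ • ∑ g : G, (V.ρ g) ∘ₗ π ∘ₗ (V.ρ g⁻¹) with hσ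
  have hcard : (Fintype.card G : ℂ) ≠ 0 := Nat.cast_ne_zero.mpr Fintype.card_ne_zero
  have hσapp : ∀ x, σ x = (Fintype.card G : ℂ)⁻¹ • ∑ g : G, V.ρ g (π (V.ρ g⁻¹ x)) := by
    intro x
    simp [hσ]
  have hσp : ∀ x, σ x ∈ p := by
    intro x
    rw [hσapp]
    exact Submodule.smul_mem _ _ (Submodule.sum_mem _ fun g _ => hp g _ (hπp _))
  have hσid : ∀ x ∈ p, σ x = x := by
    intro x hx
    rw [hσapp]
    have h1 : ∀ g : G, V.ρ g (π (V.ρ g⁻¹ x)) = x := by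
      intro g
      rw [hπid _ (hp g⁻¹ x hx), ρ_inv_apply]
    simp only [h1, Finset.sum_const, Finset.card_univ]
    rw [← Nat.cast_smul_eq_nsmul ℂ, smul_smul, inv_mul_cancel₀ hcard, one_smul]
  have hσcomm : ∀ (h : G) (x : V), σ (V.ρ h x) = V.ρ h (σ x) := by
    intro h x
    rw [hσapp, hσapp, map_smul]
    congr 1
    rw [map_sum]
    refine Fintype.sum_equiv (Equiv.mulLeft h⁻¹) _ _ ?_
    intro g
    show V.ρ g (π (V.ρ g⁻¹ (V.ρ h x))) = V.ρ h (V.ρ (h⁻¹ * g) (π (V.ρ (h⁻¹ * g)⁻¹ x)))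
    have e2 : V.ρ (h⁻¹ * g)⁻¹ x = V.ρ g⁻¹ (V.ρ h x) := by
      rw [show (h⁻¹ * g)⁻¹ = g⁻¹ * h by group, ρ_mul_apply]
    rw [e2]
    conv_rhs => rw [← ρ_mul_apply, show h * (h⁻¹ * g) = g by group]
  clear_value σ
  -- q := ker σ
  refine ⟨LinearMap.ker σ, ?_, ?_, ?_⟩
  · intro g x hx
    have hx' : σ x = 0 := hx
    show σ (V.ρ g x) = 0
    rw [hσcomm, hx', map_zero]
  · -- disjoint
    rw [Submodule.disjoint_def]
    intro x hxp hxk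
    have : σ x = 0 := hxk
    rw [hσid x hxp] at this
    exact this
  · -- codisjoint
    rw [codisjoint_iff, Submodule.eq_top_iff']
    intro x
    have hd : x = σ x + (x - σ x) := by abel
    have h1 : σ x ∈ p := hσp x
    have h2 : x - σ x ∈ LinearMap.ker σ := by
      show σ (x - σ x) = 0
      rw [map_sub, hσid _ (hσp x), sub_self]
    rw [Submodule.mem_sup]
    exact ⟨σ x, h1, x - σ x, h2, hd.symm⟩

lemma subRep_simple (V : FDRep ℂ G) (q : Submodule ℂ V) (hq : Invt V q) (hqb : q ≠ ⊥)
    (hmin : ∀ r ≤ q, Invt V r → r = ⊥ ∨ r = q) : Simple (subRep V q hq) := by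
  apply simple_of
  · obtain ⟨x, hx, h0⟩ := Submodule.exists_mem_ne_zero_of_ne_bot hqb
    exact ⟨⟨x, hx⟩, 0, fun hcon => h0 (congrArg Subtype.val hcon)⟩
  · intro p hp
    set p' : Submodule ℂ V := p.map q.subtype with hp'def
    have hp'q : p' ≤ q := by
      rintro _ ⟨y, hy, rfl⟩
      exact y.2
    have hp'i : Invt V p' := by
      rintro g _ ⟨y, hy, rfl⟩
      exact ⟨(subRep V q hq).ρ g y, hp g y hy, rfl⟩
    rcases hmin p' hp'q hp'i with h | h
    · left
      rw [Submodule.eq_bot_iff] at h ⊢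
      intro y hy
      have h1 : q.subtype y ∈ p' := ⟨y, hy, rfl⟩
      exact Subtype.ext (h _ h1)
    · right
      rw [Submodule.eq_top_iff']
      intro y
      let y' : ↥q := y
      have hy' : q.subtype y' ∈ p' := by rw [h]; exact y'.2
      obtain ⟨z, hz, hzy⟩ := hy'
      have hzz : z = y := Subtype.ext hzy
      exact hzz ▸ hz

lemma endo_comm_of_finrank_one {W : Type} [AddCommGroup W] [Module ℂ W]
    (hW : finrank ℂ W = 1) (f g : W →ₗ[ℂ] W) (x : W) : f (g x) = g (f x) := by
  obtain ⟨v, hv0, hv⟩ := finrank_eq_one_iff'.mp hW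
  obtain ⟨a, ha⟩ := hv (f v)
  obtain ⟨b, hb⟩ := hv (g v)
  obtain ⟨c, hc⟩ := hv x
  have e1 : f (g (c • v)) = (c * b * a) • v := by
    rw [map_smul, ← hb, smul_smul, map_smul, ← ha, smul_smul]
  have e2 : g (f (c • v)) = (c * a * b) • v := by
    rw [map_smul, ← ha, smul_smul, map_smul, ← hb, smul_smul]
  rw [← hc, e1, e2]
  ring_nf

lemma commute_of_all_simple_trivial [Finite G] {N : Subgroup G}
    (hyp : ∀ ψ : FDRep ℂ G, Simple ψ → (∀ n : N, ψ.ρ (n : G) = LinearMap.id) → finrank ℂ ψ = 1) :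
    ∀ (m : ℕ) (V : FDRep ℂ G), finrank ℂ V ≤ m → (∀ n : N, V.ρ (n : G) = LinearMap.id) →
      ∀ (a b : G) (x : V), V.ρ a (V.ρ b x) = V.ρ b (V.ρ a x) := by
  intro m
  induction m with
  | zero =>
    intro V hV htriv a b x
    have hss : Subsingleton V := finrank_zero_iff.mp (Nat.le_zero.mp hV)
    exact @Subsingleton.elim _ hss _ _
  | succ m ih =>
    intro V hV htriv a b x
    by_cases h0 : finrank ℂ V = 0
    · have hss : Subsingleton V := finrank_zero_iff.mp h0
      exact @Subsingleton.elim _ hss _ _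
    have htop : (⊤ : Submodule ℂ V) ≠ ⊥ := by
      intro h
      apply h0
      rw [← finrank_top ℂ V, h, finrank_bot]
    obtain ⟨q, hqt, hqi, hqb, hqmin⟩ :=
      exists_minimal_invt V (finrank ℂ V) ⊤ (by rw [finrank_top]) 
        (fun g x _ => Submodule.mem_top) htop
    have hSsimple : Simple (subRep V q hqi) := subRep_simple V q hqi hqb hqmin
    have hStriv : ∀ n : N, (subRep V q hqi).ρ (n : G) = LinearMap.id := by
      intro n
      apply LinearMap.ext
      intro y
      apply Subtype.ext
      show V.ρ (n : G) (q.subtype y) = q.subtype y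
      exact LinearMap.congr_fun (htriv n) (q.subtype y)
    have hq1 : finrank ℂ ↥q = 1 := hyp _ hSsimple hStriv
    obtain ⟨w, hwi, hcompl⟩ := exists_invt_compl V q hqi
    have hsum : finrank ℂ ↥q + finrank ℂ ↥w = finrank ℂ V :=
      Submodule.finrank_add_eq_of_isCompl hcompl
    have hwm : finrank ℂ ↥w ≤ m := by omega
    -- commute on w
    have hcw : ∀ y ∈ w, V.ρ a (V.ρ b y) = V.ρ b (V.ρ a y) := by
      intro y hy
      have := ih (subRep V w hwi) hwm (by
        intro n
        apply LinearMap.ext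
        intro z
        apply Subtype.ext
        exact LinearMap.congr_fun (htriv n) (w.subtype z)) a b ⟨y, hy⟩
      exact congrArg Subtype.val this
    -- commute on q
    have hcq : ∀ y ∈ q, V.ρ a (V.ρ b y) = V.ρ b (V.ρ a y) := by
      intro y hy
      have := endo_comm_of_finrank_one hq1 ((subRep V q hqi).ρ a) ((subRep V q hqi).ρ b) ⟨y, hy⟩
      exact congrArg Subtype.val this
    -- decompose x
    have hx : x ∈ q ⊔ w := by
      rw [codisjoint_iff.mp hcompl.codisjoint]
      exact Submodule.mem_top
    obtain ⟨u, hu, z, hz, rfl⟩ := Submodule.mem_sup.mp hx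
    rw [map_add, map_add, map_add, map_add, hcq u hu, hcw z hz]


lemma unit_conj_mul {H : Type} [Group H] [Finite H] (μ : H →* ℂˣ) (n : H) :
    (μ n : ℂ) * (starRingEnd ℂ) ((μ n : ℂ)) = 1 := by
  have := Fintype.ofFinite H
  have hpow : (μ n : ℂ) ^ Fintype.card H = 1 := by
    rw [← Units.val_pow_eq_pow_val, ← map_pow, pow_card_eq_one, map_one, Units.val_one]
  have hnn : ‖(μ n : ℂ)‖₊ = 1 := by
    have h2 : ‖(μ n : ℂ)‖₊ ^ Fintype.card H = 1 := by
      rw [← nnnorm_pow, hpow, nnnorm_one]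
    exact (pow_eq_one_iff.mp h2).resolve_right Fintype.card_ne_zero
  have habs : ‖((μ n : ℂ))‖ = 1 := by
    rw [← coe_nnnorm, hnn, NNReal.coe_one]
  rw [Complex.mul_conj, Complex.normSq_eq_norm_sq, habs]
  norm_num

noncomputable def oneDimRep {H : Type} [Group H] (μ : H →* ℂˣ) : Representation ℂ H ℂ where
  toFun := fun n => (μ n : ℂ) • LinearMap.id
  map_one' := by ext x; simp
  map_mul' := by
    intro a b
    ext x
    simp [Module.End.mul_apply, smul_smul]
    ring

lemma oneDim_char {H : Type} [Group H] (μ : H →* ℂˣ) :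
    (FDRep.of (oneDimRep μ)).character = fun n => (μ n : ℂ) := by
  funext n
  show LinearMap.trace ℂ ℂ ((oneDimRep μ) n) = _
  show LinearMap.trace ℂ ℂ ((μ n : ℂ) • LinearMap.id) = _
  simp

lemma oneDim_simple {H : Type} [Group H] (μ : H →* ℂˣ) : CategoryTheory.Simple (FDRep.of (oneDimRep μ)) := by
  apply simple_of
  · exact (inferInstance : Nontrivial ℂ)
  · intro p _
    have h := eq_bot_or_eq_top (show Submodule ℂ ℂ from p)
    exact h

lemma isIrrChar_unit {H : Type} [Group H] (μ : H →* ℂˣ) :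
    IsIrrChar H (fun n => (μ n : ℂ)) :=
  ⟨FDRep.of (oneDimRep μ), oneDim_simple μ, oneDim_char μ⟩

lemma core [Finite G] {N : Subgroup G} (h : UnramifiedOver G N)
    (μ : ↥N →* ℂˣ) (a : ↥N) (ha : (μ a : ℂ) ≠ 1)
    (S : FDRep ℂ G) (hsimple : CategoryTheory.Simple S)
    (hS : ∀ n : ↥N, S.ρ (n : G) = (μ n : ℂ) • LinearMap.id) :
    finrank ℂ S = 1 := by
  haveI := hsimple
  have hd0 : finrank ℂ S ≠ 0 := by
    have := nontrivial_of_simple S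
    exact (finrank_pos (R := ℂ) (M := S)).ne'
  have hchar : ∀ n : ↥N, S.character (n : G) = (μ n : ℂ) * (finrank ℂ S : ℂ) := by
    intro n
    show LinearMap.trace ℂ _ (S.ρ (n : G)) = _
    rw [hS n, map_smul, LinearMap.trace_id]
    rfl
  rcases h S.character ⟨S, hsimple, rfl⟩ with hmf | hconst
  · have hirr : IsIrrChar ↥N (fun n => (μ n : ℂ)) := isIrrChar_unit μ
    have hci : charInner ↥N (fun n : ↥N => S.character ↑n) (fun n => (μ n : ℂ))
        = (finrank ℂ S : ℂ) := by
      have := Fintype.ofFinite ↥N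
      unfold charInner
      rw [finsum_eq_sum_of_fintype]
      have hterm : ∀ n : ↥N, S.character ↑n * (starRingEnd ℂ) ((μ n : ℂ)) = (finrank ℂ S : ℂ) := by
        intro n
        rw [hchar n, mul_comm ((μ n : ℂ)) ((finrank ℂ S : ℂ)), mul_assoc, unit_conj_mul, mul_one]
      simp only [hterm]
      rw [Finset.sum_const, Finset.card_univ, nsmul_eq_mul, ← mul_assoc,
        Nat.card_eq_fintype_card, inv_mul_cancel₀, one_mul]
      exact Nat.cast_ne_zero.mpr Fintype.card_ne_zero
    rcases hmf _ hirr with h0 | h1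
    · rw [hci] at h0
      exact absurd (Nat.cast_eq_zero.mp h0) hd0
    · rw [hci] at h1
      exact_mod_cast h1
  · exfalso
    have hc := hconst a
    rw [hchar a] at hc
    have h1 : S.character (1 : G) = (finrank ℂ S : ℂ) := FDRep.char_one S
    rw [h1] at hc
    have hdc : (finrank ℂ S : ℂ) ≠ 0 := Nat.cast_ne_zero.mpr hd0
    exact ha (mul_right_cancel₀ hdc (hc.trans (one_mul _).symm))


section Induced
variable [Finite G] {N : Subgroup G} [hNn : N.Normal]

noncomputable def rightRegular (G : Type) [Group G] : Representation ℂ G (G → ℂ) where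
  toFun g :=
    { toFun := fun f => fun x => f (x * g)
      map_add' := fun _ _ => rfl
      map_smul' := fun _ _ => rfl }
  map_one' := by
    apply LinearMap.ext; intro f; funext x; simp
  map_mul' := by
    intro a b
    apply LinearMap.ext; intro f; funext x
    show f (x * (a * b)) = f (x * a * b)
    rw [mul_assoc]

noncomputable def indSpace (N : Subgroup G) (μ : ↥N →* ℂˣ) : Submodule ℂ (G → ℂ) where
  carrier := {f | ∀ (n : ↥N) (x : G), f (↑n * x) = (μ n : ℂ) * f x}
  add_mem' := by intro f g hf hg n x; simp only [Pi.add_apply, hf n x, hg n x]; ring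
  zero_mem' := by intro n x; simp
  smul_mem' := by intro c f hf n x; simp only [Pi.smul_apply, hf n x, smul_eq_mul]; ring

noncomputable def indV₀ (G : Type) [Group G] [Finite G] : FDRep ℂ G :=
  FDRep.of (rightRegular G)

lemma indSpace_invt (μ : ↥N →* ℂˣ) : Invt (indV₀ G) (indSpace N μ) := by
  intro g f hf n x
  show f (↑n * x * g) = (μ n : ℂ) * f (x * g)
  rw [mul_assoc]
  exact hf n (x * g)

lemma indSpace_ne_bot (μ : ↥N →* ℂˣ) : indSpace N μ ≠ ⊥ := by
  classical
  intro hbot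
  have hf : (fun x => if hx : x ∈ N then ((μ ⟨x, hx⟩ : ℂ)) else 0) ∈ indSpace N μ := by
    intro n x
    beta_reduce
    by_cases hx : x ∈ N
    · have hnx : (↑n : G) * x ∈ N := mul_mem n.2 hx
      rw [dif_pos hx, dif_pos hnx]
      have : (⟨↑n * x, hnx⟩ : ↥N) = n * ⟨x, hx⟩ := rfl
      rw [this, map_mul, Units.val_mul]
    · have hnx : ¬ ((↑n : G) * x ∈ N) := by
        intro hmem
        apply hx
        have : x = (↑n)⁻¹ * (↑n * x) := by group
        rw [this]
        exact mul_mem (inv_mem n.2) hmem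
      rw [dif_neg hx, dif_neg hnx, mul_zero]
  have h0 : (fun x => if hx : x ∈ N then ((μ ⟨x, hx⟩ : ℂ)) else 0) = (0 : G → ℂ) := by
    rw [hbot] at hf
    simpa using hf
  have h1 := congrFun h0 1
  rw [dif_pos (one_mem N)] at h1
  have : (⟨(1 : G), one_mem N⟩ : ↥N) = 1 := rfl
  rw [this, map_one] at h1
  simp at h1

lemma exists_lam (h : UnramifiedOver G N)
    (μ : ↥N →* ℂˣ) (a : ↥N) (ha : (μ a : ℂ) ≠ 1)
    (hinv : ∀ (g : G) (n m : ↥N), (↑m : G) = g⁻¹ * ↑n * g → μ m = μ n) :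
    ∃ lam : G →* ℂˣ, ∀ n : ↥N, lam ↑n = μ n := by
  obtain ⟨q, hql, hqi, hqb, hqmin⟩ :=
    exists_minimal_invt (indV₀ G) (finrank ℂ (indSpace N μ)) (indSpace N μ) le_rfl
      (indSpace_invt μ) (indSpace_ne_bot μ)
  set S := subRep (indV₀ G) q hqi with hSdef
  have hsimp : CategoryTheory.Simple S := subRep_simple _ _ _ hqb hqmin
  have hSrho : ∀ n : ↥N, S.ρ (↑n : G) = (μ n : ℂ) • LinearMap.id := by
    intro n
    apply LinearMap.ext
    intro f
    apply Subtype.ext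
    have hfin : (q.subtype f) ∈ indSpace N μ := hql f.2
    show rightRegular G ↑n (q.subtype f) = (μ n : ℂ) • (q.subtype f)
    funext x
    show (q.subtype f) (x * ↑n) = (μ n : ℂ) * (q.subtype f) x
    have hmem : x * ↑n * x⁻¹ ∈ N := by
      have := hNn.conj_mem ↑n n.2 x
      exact this
    set m : ↥N := ⟨x * ↑n * x⁻¹, hmem⟩ with hm
    have hx1 : x * ↑n = ↑m * x := by rw [hm]; group
    rw [hx1, hfin m x]
    have hμ : μ m = μ n := by
      apply hinv x⁻¹ n m
      show (x * ↑n * x⁻¹ : G) = x⁻¹⁻¹ * ↑n * x⁻¹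
      group
    rw [hμ]
  have hdim : finrank ℂ S = 1 := core h μ a ha S hsimp hSrho
  obtain ⟨v, hv0, hv⟩ := finrank_eq_one_iff'.mp hdim
  have hinj : Function.Injective (fun c : ℂ => c • v) := smul_left_injective ℂ hv0
  let lamF : G → ℂ := fun g => Classical.choose (hv (S.ρ g v))
  have hspec : ∀ g : G, lamF g • v = S.ρ g v := fun g => Classical.choose_spec (hv (S.ρ g v))
  have hone : lamF 1 = 1 := by
    apply hinj
    show lamF 1 • v = (1 : ℂ) • v
    rw [hspec, map_one, one_smul]
    rfl
  have hmul : ∀ g g' : G, lamF (g * g') = lamF g * lamF g' := by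
    intro g g'
    apply hinj
    show lamF (g * g') • v = (lamF g * lamF g') • v
    rw [hspec, ρ_mul_apply, ← hspec g', map_smul, ← hspec g, smul_smul, mul_comm (lamF g')]
  have hunit : ∀ g : G, lamF g * lamF g⁻¹ = 1 := by
    intro g
    rw [← hmul, mul_inv_cancel, hone]
  refine ⟨{ toFun := fun g => ⟨lamF g, lamF g⁻¹, hunit g, by rw [mul_comm]; exact hunit g⟩
            map_one' := ?_
            map_mul' := ?_ }, ?_⟩
  · exact Units.ext hone
  · intro g g'
    exact Units.ext (hmul g g')
  · intro n
    apply Units.ext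
    show lamF ↑n = (μ n : ℂ)
    apply hinj
    show lamF ↑n • v = (μ n : ℂ) • v
    rw [hspec, hSrho n]
    rfl

end Induced


lemma simple_trivial_dim_one [Finite G] {N : Subgroup G} (h : UnramifiedOver G N)
    (μ : ↥N →* ℂˣ) (a : ↥N) (ha : (μ a : ℂ) ≠ 1)
    (lam : G →* ℂˣ) (hlam : ∀ n : ↥N, lam ↑n = μ n)
    (ψ : FDRep ℂ G) (hsimp : CategoryTheory.Simple ψ)
    (htriv : ∀ n : ↥N, ψ.ρ (↑n : G) = LinearMap.id) :
    finrank ℂ ψ = 1 := by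
  haveI := hsimp
  set ρT : Representation ℂ G ψ :=
    { toFun := fun g => (lam g : ℂ) • ψ.ρ g
      map_one' := by simp
      map_mul' := by
        intro g g'
        apply LinearMap.ext
        intro x
        show (lam (g * g') : ℂ) • ψ.ρ (g * g') x = (lam g : ℂ) • ψ.ρ g ((lam g' : ℂ) • ψ.ρ g' x)
        rw [map_smul, ρ_mul_apply, map_mul, Units.val_mul, smul_smul] } with hρT
  set T : FDRep ℂ G := FDRep.of ρT with hT
  have hTsimple : CategoryTheory.Simple T := by
    apply simple_of
    · exact nontrivial_of_simple ψ
    · intro p hp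
      have hpψ : Invt ψ p := by
        intro g x hx
        have h1 : ρT g x ∈ p := hp g x hx
        have h2 : ψ.ρ g x = (((lam g)⁻¹ : ℂˣ) : ℂ) • (ρT g x) := by
          show ψ.ρ g x = (((lam g)⁻¹ : ℂˣ) : ℂ) • ((lam g : ℂ) • ψ.ρ g x)
          rw [smul_smul, Units.inv_mul, one_smul]
        rw [h2]
        exact Submodule.smul_mem _ _ h1
      exact invt_eq_bot_or_top ψ p hpψ
  have hTrho : ∀ n : ↥N, T.ρ (↑n : G) = (μ n : ℂ) • LinearMap.id := by
    intro n
    show ρT ↑n = _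
    show (lam ↑n : ℂ) • ψ.ρ ↑n = _
    rw [htriv n, hlam n]
  exact core h μ a ha T hTsimple hTrho

noncomputable def quotRep (N : Subgroup G) [N.Normal] : Representation ℂ G (G ⧸ N → ℂ) where
  toFun g :=
    { toFun := fun f => fun x => f ((QuotientGroup.mk g)⁻¹ * x)
      map_add' := fun _ _ => rfl
      map_smul' := fun _ _ => rfl }
  map_one' := by
    apply LinearMap.ext; intro f; funext x
    show f ((QuotientGroup.mk (1 : G))⁻¹ * x) = f x
    norm_num
  map_mul' := by
    intro a b
    apply LinearMap.ext; intro f; funext x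
    show f ((QuotientGroup.mk (a * b))⁻¹ * x) = f ((QuotientGroup.mk b)⁻¹ * ((QuotientGroup.mk a)⁻¹ * x))
    congr 1
    rw [QuotientGroup.mk_mul, mul_inv_rev, mul_assoc]

lemma quotRep_trivial (N : Subgroup G) [N.Normal] (n : ↥N) :
    quotRep N (↑n : G) = LinearMap.id := by
  apply LinearMap.ext; intro f; funext x
  show f ((QuotientGroup.mk (↑n : G))⁻¹ * x) = f x
  congr 1
  have h1 : QuotientGroup.mk (↑n : G) = (1 : G ⧸ N) := (QuotientGroup.eq_one_iff _).mpr n.2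
  rw [h1, inv_one, one_mul]

lemma commutator_le_of_unramified [Finite G] {N : Subgroup G} [N.Normal]
    (h : UnramifiedOver G N)
    (μ : ↥N →* ℂˣ) (a : ↥N) (ha : (μ a : ℂ) ≠ 1)
    (lam : G →* ℂˣ) (hlam : ∀ n : ↥N, lam ↑n = μ n) :
    commutator G ≤ N := by
  classical
  have hyp : ∀ ψ : FDRep ℂ G, CategoryTheory.Simple ψ →
      (∀ n : ↥N, ψ.ρ (↑n : G) = LinearMap.id) → finrank ℂ ψ = 1 :=
    fun ψ hs ht => simple_trivial_dim_one h μ a ha lam hlam ψ hs ht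
  set V : FDRep ℂ G := FDRep.of (quotRep N) with hV
  have htrivV : ∀ n : ↥N, V.ρ (↑n : G) = LinearMap.id := fun n => quotRep_trivial N n
  have hcomm := commute_of_all_simple_trivial hyp (finrank ℂ V) V le_rfl htrivV
  rw [commutator_def, Subgroup.commutator_le]
  intro g₁ _ g₂ _
  have key : ∀ u w : G, u⁻¹ * w⁻¹ * u * w ∈ N := by
    intro u w
    set f : G ⧸ N → ℂ := fun x => if x = 1 then 1 else 0 with hf
    have := hcomm u w f
    have heval := congrFun this ((QuotientGroup.mk u) * (QuotientGroup.mk w))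
    have hL : V.ρ u (V.ρ w f) ((QuotientGroup.mk u) * (QuotientGroup.mk w)) = 1 := by
      show f ((QuotientGroup.mk w)⁻¹ * ((QuotientGroup.mk u)⁻¹ * ((QuotientGroup.mk u) * (QuotientGroup.mk w)))) = 1
      rw [show ((QuotientGroup.mk w : G ⧸ N))⁻¹ * ((QuotientGroup.mk u)⁻¹ * ((QuotientGroup.mk u) * (QuotientGroup.mk w))) = 1 by group]
      simp [hf]
    have hR : V.ρ w (V.ρ u f) ((QuotientGroup.mk u) * (QuotientGroup.mk w))
        = f ((QuotientGroup.mk u)⁻¹ * ((QuotientGroup.mk w)⁻¹ * ((QuotientGroup.mk u) * (QuotientGroup.mk w)))) := rfl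
    rw [heval, hR] at hL
    by_contra hmem
    have hne : (QuotientGroup.mk u : G ⧸ N)⁻¹ * ((QuotientGroup.mk w)⁻¹ * ((QuotientGroup.mk u) * (QuotientGroup.mk w))) ≠ 1 := by
      intro heq
      apply hmem
      have : QuotientGroup.mk (u⁻¹ * (w⁻¹ * (u * w))) = (1 : G ⧸ N) := by
        rw [QuotientGroup.mk_mul, QuotientGroup.mk_mul, QuotientGroup.mk_mul]
        simpa using heq
      have := (QuotientGroup.eq_one_iff _).mp this
      convert this using 1
      group
    rw [hf] at hL
    simp only [if_neg hne] at hL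
    exact zero_ne_one hL
  have := key g₁⁻¹ g₂⁻¹
  have heq : ⁅g₁, g₂⁆ = g₁⁻¹⁻¹ * g₂⁻¹⁻¹ * g₁⁻¹ * g₂⁻¹ := by
    rw [commutatorElement_def]
    group
  rw [heq]
  exact this


lemma exists_invariant_char [Finite G] (N : Subgroup G) [N.Normal]
    (hab : ∀ a b : ↥N, a * b = b * a) (x : G) (hxN : x ∈ N)
    (hxK : x ∉ ⁅N, (⊤ : Subgroup G)⁆) :
    ∃ μ : ↥N →* ℂˣ, (μ ⟨x, hxN⟩ : ℂ) ≠ 1 ∧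
      (∀ (g : G) (n m : ↥N), (↑m : G) = g⁻¹ * ↑n * g → μ m = μ n) := by
  classical
  letI : CommGroup ↥N := { (inferInstance : Group ↥N) with mul_comm := hab }
  set K' : Subgroup ↥N := (⁅N, (⊤ : Subgroup G)⁆).subgroupOf N with hK'
  haveI : K'.Normal := Subgroup.normal_of_comm K'
  set Q := ↥N ⧸ K' with hQ
  letI : CommGroup Q := { (inferInstance : Group Q) with
    mul_comm := by
      intro a b
      induction a using QuotientGroup.induction_on with
      | H a =>
      induction b using QuotientGroup.induction_on with
      | H b =>
      rw [← QuotientGroup.mk_mul, ← QuotientGroup.mk_mul, hab] }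
  haveI : NeZero (Monoid.exponent Q) := ⟨Monoid.exponent_ne_zero_of_finite⟩
  have hxQ : (QuotientGroup.mk (⟨x, hxN⟩ : ↥N) : Q) ≠ 1 := by
    intro hone
    apply hxK
    have := (QuotientGroup.eq_one_iff _).mp hone
    exact (Subgroup.mem_subgroupOf).mp this
  obtain ⟨φ, hφ⟩ := CommGroup.exists_apply_ne_one_of_hasEnoughRootsOfUnity Q ℂ hxQ
  refine ⟨φ.comp (QuotientGroup.mk' K'), ?_, ?_⟩
  · intro h1
    apply hφ
    apply Units.ext
    exact h1
  · intro g n m hm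
    have hmem : m * n⁻¹ ∈ K' := by
      rw [Subgroup.mem_subgroupOf]
      have : ((m * n⁻¹ : ↥N) : G) = ⁅g⁻¹, (↑n : G)⁆ := by
        rw [commutatorElement_def]
        push_cast
        rw [hm]
        group
      rw [this]
      have hmem2 : ⁅g⁻¹, (↑n : G)⁆ ∈ ⁅(⊤ : Subgroup G), N⁆ :=
        Subgroup.commutator_mem_commutator (Subgroup.mem_top _) n.2
      rwa [Subgroup.commutator_comm] at hmem2
    have hq : (QuotientGroup.mk (m * n⁻¹) : Q) = 1 := (QuotientGroup.eq_one_iff _).mpr hmem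
    have : φ.comp (QuotientGroup.mk' K') m
        = φ.comp (QuotientGroup.mk' K') (m * n⁻¹) * φ.comp (QuotientGroup.mk' K') n := by
      rw [← map_mul]
      congr 1
      group
    rw [this]
    have h2 : φ.comp (QuotientGroup.mk' K') (m * n⁻¹) = 1 := by
      show φ (QuotientGroup.mk (m * n⁻¹)) = 1
      rw [hq, map_one]
    rw [h2, one_mul]

end Stmt6Aux

/-- If G is unramified over a nontrivial abelian normal subgroup N, then
[N,G] = N or [N,G] = G'; in particular N ⊆ G' or G' ⊆ N. -/
theorem stmt_6 {G : Type} [Group G] [Finite G] (N : Subgroup G) [N.Normal]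
    (hab : ∀ a b : ↥N, a * b = b * a) (hbot : N ≠ ⊥)
    (h : UnramifiedOver G N) :
    (⁅N, (⊤ : Subgroup G)⁆ = N ∨ ⁅N, (⊤ : Subgroup G)⁆ = commutator G) ∧
    (N ≤ commutator G ∨ commutator G ≤ N) := by
  classical
  by_cases hKN : ⁅N, (⊤ : Subgroup G)⁆ = N
  · refine ⟨Or.inl hKN, Or.inl ?_⟩
    calc N = ⁅N, ⊤⁆ := hKN.symm
    _ ≤ ⁅⊤, ⊤⁆ := Subgroup.commutator_mono le_top le_rfl
    _ = commutator G := (commutator_def G).symm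
  · have hKle : ⁅N, (⊤ : Subgroup G)⁆ ≤ N := Subgroup.commutator_le_left N ⊤
    obtain ⟨x₀, hx₀N, hx₀K⟩ := SetLike.exists_of_lt (hKle.lt_of_ne hKN)
    obtain ⟨μ₁, hμ₁, hinv₁⟩ := Stmt6Aux.exists_invariant_char N hab x₀ hx₀N hx₀K
    obtain ⟨lam₁, hlam₁⟩ := Stmt6Aux.exists_lam h μ₁ ⟨x₀, hx₀N⟩ hμ₁ hinv₁
    have hGN : commutator G ≤ N :=
      Stmt6Aux.commutator_le_of_unramified h μ₁ ⟨x₀, hx₀N⟩ hμ₁ lam₁ hlam₁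
    have hKG : ⁅N, (⊤ : Subgroup G)⁆ = commutator G := by
      apply le_antisymm
      · rw [commutator_def]
        exact Subgroup.commutator_mono le_top le_rfl
      · intro x hx
        by_contra hxK
        have hxN : x ∈ N := hGN hx
        obtain ⟨μ₂, hμ₂, hinv₂⟩ := Stmt6Aux.exists_invariant_char N hab x hxN hxK
        obtain ⟨lam₂, hlam₂⟩ := Stmt6Aux.exists_lam h μ₂ ⟨x, hxN⟩ hμ₂ hinv₂
        have hker : commutator G ≤ lam₂.ker := by
          rw [commutator_def, Subgroup.commutator_le]
          intro g₁ _ g₂ _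
          rw [MonoidHom.mem_ker, map_commutatorElement]
          exact commutatorElement_eq_one_iff_commute.mpr (mul_comm _ _)
        have h1 : lam₂ x = 1 := hker hx
        have h2 : lam₂ x = μ₂ ⟨x, hxN⟩ := hlam₂ ⟨x, hxN⟩
        apply hμ₂
        rw [← h2, h1, Units.val_one]
    exact ⟨Or.inr hKG, Or.inr hGN⟩
end

section
/- Let G be a finite nilpotent group. There is no nontrivial abelian normal subgroup N of G with [N,G] = N. Consequently, if a finite nilpotent group G is unramified over a nontrivial abelian normal subgroup N, then [N,G] = G′. -/
open scoped BigOperators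

open CategoryTheory Module
open scoped commutatorElement

namespace Stmt7Aux
variable {G : Type} [Group G]

def Inv {V : Type} [AddCommGroup V] [Module ℂ V] (ρ : Representation ℂ G V)
    (U : Submodule ℂ V) : Prop := ∀ (g : G), ∀ v ∈ U, ρ g v ∈ U

def subrep {V : Type} [AddCommGroup V] [Module ℂ V] (ρ : Representation ℂ G V)
    (U : Submodule ℂ V) (hU : Inv ρ U) : Representation ℂ G U where
  toFun g := LinearMap.restrict (ρ g) (fun x hx => hU g x hx)
  map_one' := by ext x; simp [LinearMap.restrict_apply]
  map_mul' g h := by ext x; simp [LinearMap.restrict_apply]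

lemma comm_apply {X Y : FDRep ℂ G} (f : X ⟶ Y) (g : G) (v : X) :
    f.hom (X.ρ g v) = Y.ρ g (f.hom v) :=
  congrArg (fun h => h.hom.hom v) (f.comm g)

/-- a mono in FDRep has injective underlying map -/
lemma mono_inj {X Y : FDRep ℂ G} (f : X ⟶ Y) [Mono f] :
    Function.Injective f.hom := by
  rw [← LinearMap.ker_eq_bot]
  by_contra hk
  have hinv : Inv X.ρ (LinearMap.ker f.hom.hom.hom) := by
    intro g v hv
    have hv' : f.hom v = 0 := hv
    exact LinearMap.mem_ker.mpr
      ((comm_apply f g v).trans ((congrArg (Y.ρ g) hv').trans (map_zero _)))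
  haveI : FiniteDimensional ℂ (LinearMap.ker f.hom.hom.hom) := inferInstance
  let K : FDRep ℂ G := FDRep.of (subrep X.ρ _ hinv)
  let ι : K ⟶ X := ⟨FGModuleCat.ofHom (LinearMap.ker f.hom.hom.hom).subtype, fun g => rfl⟩
  have hcomp : ι ≫ f = 0 ≫ f := by
    ext1
    apply FGModuleCat.hom_ext
    show f.hom.hom.hom ∘ₗ (LinearMap.ker f.hom.hom.hom).subtype = _
    ext ⟨x, hx⟩
    simpa using hx
  have hι : ι = 0 := (cancel_mono f).mp hcomp
  obtain ⟨x, hx⟩ := Submodule.exists_mem_ne_zero_of_ne_bot hk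
  have : ι.hom ⟨x, hx.1⟩ = (0 : K ⟶ X).hom ⟨x, hx.1⟩ := by rw [hι]
  simpa using hx.2 this

/-- Simple from: nontrivial + no nontrivial invariant submodules. -/
lemma simple_of_irred (X : FDRep ℂ G) (hnt : Nontrivial X)
    (hirr : ∀ U : Submodule ℂ X, Inv X.ρ U → U = ⊥ ∨ U = ⊤) : Simple X := by
  constructor
  intro Y f hm
  constructor
  · intro hiso hf0
    obtain ⟨x, y, hxy⟩ := hnt
    have hfh : f.hom = 0 := by rw [hf0]; rfl
    have hid : ∀ v : X, v = f.hom ((inv f).hom v) := by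
      intro v
      exact (congrArg (fun (h : X ⟶ X) => h.hom v) (IsIso.inv_hom_id f)).symm
    have hz : ∀ v : X, v = 0 := by
      intro v
      rw [hid v, hfh]
      rfl
    exact hxy ((hz x).trans (hz y).symm)
  · intro hf0
    have hinj : Function.Injective f.hom := mono_inj f
    have hinv : Inv X.ρ (LinearMap.range f.hom.hom.hom) := by
      rintro g v ⟨w, rfl⟩
      exact ⟨Y.ρ g w, (comm_apply f g w)⟩
    have hrange : LinearMap.range f.hom.hom.hom = ⊤ := by
      rcases hirr _ hinv with h | h
      · exfalso
        apply hf0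
        ext1
        apply FGModuleCat.hom_ext
        apply LinearMap.ext
        intro w
        have : f.hom.hom.hom w ∈ LinearMap.range f.hom.hom.hom := ⟨w, rfl⟩
        rw [h] at this
        simpa using this
      · exact h
    let e : (Y : Type) ≃ₗ[ℂ] X := LinearEquiv.ofBijective f.hom.hom.hom
      ⟨hinj, LinearMap.range_eq_top.mp hrange⟩
    refine ⟨⟨⟨FGModuleCat.ofHom (e.symm : (X : Type) →ₗ[ℂ] Y), ?_⟩, ?_, ?_⟩⟩
    · intro g
      apply FGModuleCat.hom_ext
      show (e.symm : (X : Type) →ₗ[ℂ] Y) ∘ₗ X.ρ g = Y.ρ g ∘ₗ (e.symm : (X : Type) →ₗ[ℂ] Y)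
      apply LinearMap.ext
      intro v
      apply e.injective
      show f.hom _ = f.hom _
      simp only [LinearMap.coe_comp, Function.comp_apply]
      calc f.hom (e.symm (X.ρ g v)) = e (e.symm (X.ρ g v)) := rfl
        _ = X.ρ g v := e.apply_symm_apply _
        _ = X.ρ g (e (e.symm v)) := by rw [e.apply_symm_apply]
        _ = X.ρ g (f.hom (e.symm v)) := rfl
        _ = f.hom (Y.ρ g (e.symm v)) := (comm_apply f g _).symm
    · ext1
      apply FGModuleCat.hom_ext
      apply LinearMap.ext
      intro v
      exact e.symm_apply_apply v
    · ext1
      apply FGModuleCat.hom_ext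
      apply LinearMap.ext
      intro v
      exact e.apply_symm_apply v

lemma nontrivial_of_simple (X : FDRep ℂ G) [Simple X] : Nontrivial X := by
  by_contra h
  have hs : Subsingleton X := not_nontrivial_iff_subsingleton.mp h
  apply CategoryTheory.id_nonzero X
  ext1
  apply FGModuleCat.hom_ext
  apply LinearMap.ext
  intro v
  exact @Subsingleton.elim _ hs _ _

/-- Schur: an equivariant endomorphism of a simple FDRep is scalar -/
lemma schur_scalar (X : FDRep ℂ G) [Simple X] (φ : (X : Type) →ₗ[ℂ] X)
    (hφ : ∀ g : G, φ ∘ₗ X.ρ g = X.ρ g ∘ₗ φ) : ∃ c : ℂ, φ = c • LinearMap.id := by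
  have hfr : finrank ℂ (X ⟶ X) = 1 := by
    rw [FDRep.finrank_hom_simple_simple X X, if_pos ⟨Iso.refl X⟩]
  have hid : (𝟙 X : X ⟶ X) ≠ 0 := CategoryTheory.id_nonzero X
  let Φ : X ⟶ X := ⟨FGModuleCat.ofHom φ, fun g => FGModuleCat.hom_ext (hφ g)⟩
  obtain ⟨c, hc⟩ : ∃ c : ℂ, Φ = c • (𝟙 X) := by
    obtain ⟨w, hw⟩ := (finrank_eq_one_iff_of_nonzero' (𝟙 X : X ⟶ X) hid).mp hfr Φ
    exact ⟨w, hw.symm⟩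
  refine ⟨c, ?_⟩
  have := congrArg (fun (h : X ⟶ X) => h.hom.hom.hom) hc
  exact this

lemma maschke [Finite G] {V : Type} [AddCommGroup V] [Module ℂ V]
    (ρ : Representation ℂ G V) (U : Submodule ℂ V) (hU : Inv ρ U) :
    ∃ W : Submodule ℂ V, Inv ρ W ∧ IsCompl U W := by
  haveI := Fintype.ofFinite G
  obtain ⟨C, hC⟩ := Submodule.exists_isCompl U
  set π : V →ₗ[ℂ] V := U.subtype ∘ₗ (U.projectionOnto C hC) with hπ
  have hπ₁ : ∀ v, π v ∈ U := fun v => (U.projectionOnto C hC v).2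
  have hπ₂ : ∀ u ∈ U, π u = u := by
    intro u hu
    show ((U.projectionOnto C hC u : U) : V) = u
    exact congrArg Subtype.val (Submodule.projectionOnto_apply_left hC ⟨u, hu⟩)
  have hcard : (Nat.card G : ℂ) ≠ 0 := by
    simp [Nat.card_pos.ne']
  set T : V →ₗ[ℂ] V := (Nat.card G : ℂ)⁻¹ • ∑ g : G, ρ g ∘ₗ π ∘ₗ ρ g⁻¹ with hT
  have hTapp : ∀ v, T v = (Nat.card G : ℂ)⁻¹ • ∑ g : G, ρ g (π (ρ g⁻¹ v)) := by
    intro v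
    rw [hT]
    simp [LinearMap.sum_apply]
  have hTU : ∀ v, T v ∈ U := by
    intro v
    rw [hTapp]
    exact U.smul_mem _ (Submodule.sum_mem _ (fun g _ => hU g _ (hπ₁ _)))
  have hgg : ∀ (g : G) (v : V), ρ g (ρ g⁻¹ v) = v := by
    intro g v
    have : ρ g * ρ g⁻¹ = 1 := by rw [← map_mul, mul_inv_cancel, map_one]
    calc ρ g (ρ g⁻¹ v) = (ρ g * ρ g⁻¹) v := rfl
      _ = v := by rw [this]; rfl
  have hTfix : ∀ u ∈ U, T u = u := by
    intro u hu
    rw [hTapp]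
    have : ∀ g : G, ρ g (π (ρ g⁻¹ u)) = u := by
      intro g
      rw [hπ₂ _ (hU g⁻¹ u hu), hgg]
    rw [Finset.sum_congr rfl (fun g _ => this g), Finset.sum_const]
    rw [Finset.card_univ, ← Nat.card_eq_fintype_card, ← Nat.cast_smul_eq_nsmul ℂ, smul_smul,
      inv_mul_cancel₀ hcard, one_smul]
  have hTcomm : ∀ (h : G) (v : V), T (ρ h v) = ρ h (T v) := by
    intro h v
    rw [hTapp, hTapp, map_smul, map_sum]
    congr 1
    refine (Fintype.sum_bijective (fun g => h * g) (Equiv.mulLeft h).bijective _ _ ?_).symm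
    intro g
    show ρ h (ρ g (π (ρ g⁻¹ v))) = ρ (h * g) (π (ρ (h*g)⁻¹ (ρ h v)))
    refine Eq.symm ?_
    have h1 : ρ (h*g)⁻¹ (ρ h v) = ρ g⁻¹ v := by
      calc ρ (h*g)⁻¹ (ρ h v) = (ρ (h*g)⁻¹ * ρ h) v := rfl
        _ = ρ ((h*g)⁻¹ * h) v := by rw [← map_mul]
        _ = ρ g⁻¹ v := by rw [mul_inv_rev, mul_assoc, inv_mul_cancel, mul_one]
    rw [h1]
    calc ρ (h * g) (π (ρ g⁻¹ v)) = (ρ h * ρ g) (π (ρ g⁻¹ v)) := by rw [← map_mul]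
      _ = ρ h (ρ g (π (ρ g⁻¹ v))) := rfl
  refine ⟨LinearMap.ker T, ?_, ?_, ?_⟩
  · intro g v hv
    simp only [LinearMap.mem_ker] at hv ⊢
    rw [hTcomm, hv, map_zero]
  · rw [Submodule.disjoint_def]
    intro x hxU hxK
    rw [LinearMap.mem_ker] at hxK
    rw [← hTfix x hxU, hxK]
  · rw [codisjoint_iff, eq_top_iff]
    intro v _
    have hv : v = T v + (v - T v) := by abel
    rw [hv]
    refine Submodule.add_mem_sup (hTU v) ?_
    rw [LinearMap.mem_ker, map_sub, hTfix _ (hTU v), sub_self]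

lemma sep_aux [Finite G] (M : Subgroup G) (n : G) :
    ∀ (d : ℕ) (V : Type) (inst1 : AddCommGroup V) (inst2 : Module ℂ V)
      (inst3 : FiniteDimensional ℂ V) (ρ : Representation ℂ G V),
      finrank ℂ V ≤ d → (∀ m ∈ M, ρ m = 1) → ρ n ≠ 1 →
      ∃ X : FDRep ℂ G, Simple X ∧ (∀ U : Submodule ℂ X, Inv X.ρ U → U = ⊥ ∨ U = ⊤) ∧
        (∀ m ∈ M, X.ρ m = 1) ∧ X.ρ n ≠ 1 := by
  intro d
  induction d with
  | zero =>
    intro V _ _ _ ρ hd hM hn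
    exfalso
    apply hn
    have : finrank ℂ V = 0 := Nat.le_zero.mp hd
    haveI : Subsingleton V := (Module.finrank_zero_iff (R := ℂ) (M := V)).mp this
    apply LinearMap.ext
    intro v
    exact Subsingleton.elim _ _
  | succ d ih =>
    intro V _ _ _ ρ hd hM hn
    by_cases hirr : ∀ U : Submodule ℂ V, Inv ρ U → U = ⊥ ∨ U = ⊤
    · refine ⟨FDRep.of ρ, ?_, ?_, ?_, ?_⟩
      · apply simple_of_irred
        · obtain ⟨v, hv⟩ : ∃ v, ρ n v ≠ v := by
            by_contra h
            push_neg at h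
            exact hn (LinearMap.ext fun v => h v)
          exact ⟨ρ n v, v, hv⟩
        · intro U hU
          exact hirr U hU
      · intro U hU
        exact hirr U hU
      · intro m hm
        show ρ m = 1
        exact hM m hm
      · show ρ n ≠ 1
        exact hn
    · push_neg at hirr
      obtain ⟨U, hUinv, hUne⟩ := hirr
      obtain ⟨W, hWinv, hcompl⟩ := maschke ρ U hUinv
      -- n acts nontrivially on U or on W
      have hsplit : (∃ u ∈ U, ρ n u ≠ u) ∨ (∃ w ∈ W, ρ n w ≠ w) := by
        by_contra h
        push_neg at h
        apply hn
        apply LinearMap.ext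
        intro v
        obtain ⟨u, hu, w, hw, rfl⟩ : ∃ u ∈ U, ∃ w ∈ W, u + w = v := by
          have : v ∈ U ⊔ W := by rw [hcompl.sup_eq_top]; trivial
          obtain ⟨u, hu, w, hw, hv⟩ := Submodule.mem_sup.mp this
          exact ⟨u, hu, w, hw, hv⟩
        show ρ n (u + w) = u + w
        rw [map_add, h.1 u hu, h.2 w hw]
      -- helper to recurse into an invariant proper submodule
      have hrec : ∀ (P : Submodule ℂ V), Inv ρ P → P ≠ ⊤ → (∃ p ∈ P, ρ n p ≠ p) →
          ∃ X : FDRep ℂ G, Simple X ∧ (∀ U : Submodule ℂ X, Inv X.ρ U → U = ⊥ ∨ U = ⊤) ∧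
            (∀ m ∈ M, X.ρ m = 1) ∧ X.ρ n ≠ 1 := by
        intro P hPinv hPne ⟨p, hp, hpne⟩
        refine ih P _ _ inferInstance (subrep ρ P hPinv) ?_ ?_ ?_
        · have : finrank ℂ P < finrank ℂ V := Submodule.finrank_lt hPne
          omega
        · intro m hm
          apply LinearMap.ext
          intro x
          apply Subtype.ext
          show ρ m (x : V) = (x : V)
          rw [hM m hm]
          rfl
        · intro h
          apply hpne
          have := congrArg (fun (φ : P →ₗ[ℂ] P) => ((φ ⟨p, hp⟩ : P) : V)) h
          exact this
      rcases hsplit with h | h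
      · exact hrec U hUinv hUne.2 h
      · have hWtop : W ≠ ⊤ := by
          intro hW
          apply hUne.1
          have := hcompl.1
          rw [hW, disjoint_top] at this
          exact this
        exact hrec W hWinv hWtop h

lemma separation_rep [Finite G] (M : Subgroup G) [M.Normal] (n : G) (hn : n ∉ M) :
    ∃ (V : Type) (_ : AddCommGroup V) (_ : Module ℂ V) (_ : FiniteDimensional ℂ V)
      (ρ : Representation ℂ G V), (∀ m ∈ M, ρ m = 1) ∧ ρ n ≠ 1 := by
  haveI : Fintype (G ⧸ M) := Fintype.ofFinite _
  refine ⟨MonoidAlgebra ℂ (G ⧸ M), inferInstance, inferInstance, inferInstance,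
    Representation.ofMulAction ℂ G (G ⧸ M), ?_, ?_⟩
  · intro m hm
    apply MonoidAlgebra.lhom_ext'
    intro a
    apply LinearMap.ext
    intro b
    simp only [LinearMap.comp_apply, MonoidAlgebra.lsingle_apply]
    rw [Representation.ofMulAction_single]
    congr 1
    show m • a = a
    induction a using QuotientGroup.induction_on with
    | H y =>
      show ((m * y : G) : G ⧸ M) = (y : G ⧸ M)
      rw [QuotientGroup.eq]
      simpa using Subgroup.Normal.conj_mem ‹M.Normal› m⁻¹ (by simpa using hm) y⁻¹
  · intro h
    have := congrArg (fun φ : (MonoidAlgebra ℂ (G ⧸ M)) →ₗ[ℂ] (MonoidAlgebra ℂ (G ⧸ M)) =>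
      φ (MonoidAlgebra.single ((1 : G) : G ⧸ M) (1 : ℂ))) h
    rw [Representation.ofMulAction_single] at this
    have h1 : (MonoidAlgebra.single (n • ((1 : G) : G ⧸ M)) (1 : ℂ))
        = MonoidAlgebra.single ((1 : G) : G ⧸ M) (1 : ℂ) := this
    have h2 : ((n * 1 : G) : G ⧸ M) = ((1 : G) : G ⧸ M) :=
      MonoidAlgebra.single_left_injective (one_ne_zero (α := ℂ)) h1
    rw [QuotientGroup.eq] at h2
    apply hn
    simpa using h2

/-- submodules of a 1-dim space: used for simplicity of ℂ -/
lemma subC (U : Submodule ℂ ℂ) : U = ⊥ ∨ U = ⊤ := by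
  rcases eq_or_ne U ⊥ with h | h
  · exact Or.inl h
  · right
    obtain ⟨z, hz⟩ := Submodule.exists_mem_ne_zero_of_ne_bot h
    rw [eq_top_iff]
    intro w _
    have : w = (w / z) • z := by rw [smul_eq_mul, div_mul_cancel₀ w hz.2]
    rw [this]
    exact U.smul_mem _ hz.1

lemma scalar_eq {V : Type} [AddCommGroup V] [Module ℂ V] (hnt : Nontrivial V)
    {c c' : ℂ} (h : c • (LinearMap.id : V →ₗ[ℂ] V) = c' • LinearMap.id) : c = c' := by
  obtain ⟨v, hv⟩ := exists_ne (0 : V)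
  have hcv : c • v = c' • v := congrFun (congrArg DFunLike.coe h) v
  by_contra hne
  exact hv (by
    have := sub_eq_zero.mpr hcv
    rw [← sub_smul] at this
    exact (smul_eq_zero.mp this).resolve_left (sub_ne_zero.mpr hne))

/-- The key lemma: a simple rep of `G` killing `⁅N, ⊤⁆` is 1-dimensional or kills `N`. -/
lemma key [Finite G] (N : Subgroup G) (hUnr : UnramifiedOver G N)
    (X : FDRep ℂ G) [Simple X] (hM : ∀ m ∈ ⁅N, (⊤ : Subgroup G)⁆, X.ρ m = 1) :
    finrank ℂ X = 1 ∨ ∀ m ∈ N, X.ρ m = 1 := by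
  haveI hnt : Nontrivial X := nontrivial_of_simple X
  -- each element of N acts by a scalar
  have hcomm : ∀ m ∈ N, ∀ g : G, X.ρ m ∘ₗ X.ρ g = X.ρ g ∘ₗ X.ρ m := by
    intro m hm g
    have hc : m⁻¹ * (g⁻¹ * m * g) ∈ (⁅N, (⊤ : Subgroup G)⁆ : Subgroup G) := by
      have : ⁅m⁻¹, g⁻¹⁆ ∈ (⁅N, (⊤ : Subgroup G)⁆ : Subgroup G) :=
        Subgroup.commutator_mem_commutator (inv_mem hm) (Subgroup.mem_top g⁻¹)
      simpa [commutatorElement_def, mul_assoc] using this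
    have e1 : X.ρ m * X.ρ g = X.ρ (g * m) * X.ρ (m⁻¹ * (g⁻¹ * m * g)) := by
      rw [← map_mul, ← map_mul]
      congr 1
      group
    rw [hM _ hc, mul_one, map_mul] at e1
    exact e1
  choose c hc using fun (m : N) => schur_scalar X (X.ρ (m : G)) (hcomm m m.2)
  have hmul : ∀ m m' : N, c (m * m') = c m * c m' := by
    intro m m'
    apply scalar_eq hnt
    rw [← hc]
    show X.ρ ((m : G) * (m' : G)) = _
    rw [map_mul, hc, hc]
    ext v
    show c m • (c m' • v) = (c m * c m') • v
    rw [mul_smul]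
  have hone : c 1 = 1 := by
    apply scalar_eq hnt
    rw [← hc]
    show X.ρ ((1 : G)) = _
    rw [map_one]
    ext v
    simp
  have hpow : ∀ (m : N) (k : ℕ), c (m ^ k) = c m ^ k := by
    intro m k
    induction k with
    | zero => simpa using hone
    | succ k ihk => rw [pow_succ, pow_succ, hmul, ihk]
  have hunit : ∀ m : N, c m * (starRingEnd ℂ) (c m) = 1 := by
    intro m
    have hk : c m ^ (orderOf m) = 1 := by
      rw [← hpow, pow_orderOf_eq_one, hone]
    have hk0 : orderOf m ≠ 0 := (orderOf_pos m).ne'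
    have habs : ‖c m‖ = 1 := by
      have h1 : ‖c m‖ ^ (orderOf m) = 1 := by
        rw [← norm_pow, hk, norm_one]
      rcases lt_trichotomy (‖c m‖) 1 with hlt | heq | hgt
      · exact absurd h1 (pow_lt_one₀ (norm_nonneg _) hlt hk0).ne
      · exact heq
      · exact absurd h1 (one_lt_pow₀ hgt hk0).ne'
    rw [Complex.mul_conj]
    norm_cast
    rw [Complex.normSq_eq_norm_sq, habs]
    norm_num
  -- the one-dimensional representation with character c
  let ρω : Representation ℂ N ℂ :=
    { toFun := fun m => c m • (1 : ℂ →ₗ[ℂ] ℂ)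
      map_one' := by
        show c 1 • (1 : ℂ →ₗ[ℂ] ℂ) = 1
        rw [hone, one_smul]
      map_mul' := fun m m' => by
        show c (m * m') • (1 : ℂ →ₗ[ℂ] ℂ) = (c m • 1) * (c m' • 1)
        apply LinearMap.ext
        intro v
        show c (m * m') • v = c m • (c m' • v)
        rw [hmul, mul_smul] }
  let X₁ : FDRep ℂ N := FDRep.of ρω
  haveI hS₁ : Simple X₁ := by
    apply simple_of_irred
    · exact (inferInstance : Nontrivial ℂ)
    · intro U _
      exact subC U
  have hXchar : FDRep.character X₁ = fun m => c m := by
    funext m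
    show LinearMap.trace ℂ ℂ (c m • (1 : ℂ →ₗ[ℂ] ℂ)) = c m
    rw [map_smul, LinearMap.trace_one, Module.finrank_self]
    simp
  set d : ℕ := finrank ℂ X with hd
  haveI : FiniteDimensional ℂ X := inferInstance
  have hd0 : 0 < d := Module.finrank_pos
  have hchi : ∀ m : N, FDRep.character X (m : G) = c m * d := by
    intro m
    show LinearMap.trace ℂ X (X.ρ (m : G)) = c m * d
    rw [hc m, map_smul]
    rw [show LinearMap.trace ℂ X LinearMap.id = (d : ℂ) by
      rw [← LinearMap.trace_one]; rfl]
    simp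
  have hIrr : IsIrrChar G (FDRep.character X) := ⟨X, inferInstance, rfl⟩
  rcases hUnr (FDRep.character X) hIrr with hMF | htriv
  · left
    have hcI : charInner N (fun m : N => FDRep.character X (m : G)) (fun m => c m) = d := by
      haveI : Fintype N := Fintype.ofFinite _
      rw [charInner, finsum_eq_sum_of_fintype]
      have : ∀ m : N, FDRep.character X (m : G) * (starRingEnd ℂ) (c m) = d := by
        intro m
        rw [hchi m]
        calc c m * d * (starRingEnd ℂ) (c m) = (c m * (starRingEnd ℂ) (c m)) * d := by ring
          _ = d := by rw [hunit m, one_mul]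
      rw [Finset.sum_congr rfl (fun m _ => this m), Finset.sum_const, Finset.card_univ,
        ← Nat.card_eq_fintype_card, nsmul_eq_mul]
      rw [← mul_assoc, inv_mul_cancel₀, one_mul]
      simp [Nat.card_pos.ne']
    have := hMF (fun m => c m) ⟨X₁, hS₁, hXchar⟩
    rw [hcI] at this
    rcases this with h | h
    · exact absurd h (Nat.cast_ne_zero.mpr hd0.ne')
    · exact_mod_cast h
  · right
    intro m hm
    have h1 : FDRep.character X ((⟨m, hm⟩ : N) : G) = FDRep.character X 1 := htriv ⟨m, hm⟩
    rw [hchi ⟨m, hm⟩, FDRep.char_one] at h1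
    have hcm : c ⟨m, hm⟩ = 1 := by
      have hdne : (d : ℂ) ≠ 0 := Nat.cast_ne_zero.mpr hd0.ne'
      have h1' : c ⟨m, hm⟩ * (d : ℂ) = 1 * (d : ℂ) := by rw [one_mul]; exact_mod_cast h1
      exact mul_right_cancel₀ hdne h1'
    have := hc ⟨m, hm⟩
    rw [hcm, one_smul] at this
    exact this

/-- endomorphisms of a 1-dimensional space are scalar -/
lemma endo_scalar {W : Type} [AddCommGroup W] [Module ℂ W] [FiniteDimensional ℂ W]
    (h : finrank ℂ W = 1) (φ : W →ₗ[ℂ] W) : ∃ a : ℂ, φ = a • LinearMap.id := by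
  haveI : Nontrivial W := by
    apply Module.nontrivial_of_finrank_pos (R := ℂ)
    omega
  obtain ⟨v, hv⟩ := exists_ne (0 : W)
  have hsp := (finrank_eq_one_iff_of_nonzero' v hv).mp h
  obtain ⟨a, ha⟩ := hsp (φ v)
  refine ⟨a, ?_⟩
  apply LinearMap.ext
  intro w
  obtain ⟨cw, hcw⟩ := hsp w
  rw [← hcw]
  show φ (cw • v) = a • (cw • v)
  rw [map_smul, ← ha, smul_smul, smul_smul, mul_comm]

end Stmt7Aux

/-- In a finite nilpotent group there is no nontrivial abelian normal subgroup N
with [N,G] = N; consequently if G is unramified over N then [N,G] = G'. -/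
theorem stmt_7 {G : Type} [Group G] [Finite G] [Group.IsNilpotent G] :
    (∀ N : Subgroup G, N.Normal → (∀ a b : ↥N, a * b = b * a) → N ≠ ⊥ →
      ⁅N, (⊤ : Subgroup G)⁆ ≠ N) ∧
    (∀ N : Subgroup G, N.Normal → (∀ a b : ↥N, a * b = b * a) → N ≠ ⊥ →
      UnramifiedOver G N → ⁅N, (⊤ : Subgroup G)⁆ = commutator G) := by
  classical
  obtain ⟨k, hk⟩ := nilpotent_iff_lowerCentralSeries.mp ‹Group.IsNilpotent G›
  have part1 : ∀ N : Subgroup G, N.Normal → (∀ a b : ↥N, a * b = b * a) → N ≠ ⊥ →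
      ⁅N, (⊤ : Subgroup G)⁆ ≠ N := by
    intro N _ _ hbot heq
    have hle : ∀ j : ℕ, N ≤ (⊤ : Subgroup G).lowerCentralSeries j := by
      intro j
      induction j with
      | zero => exact le_top
      | succ j ih =>
        rw [lowerCentralSeries_succ, ← heq]
        exact Subgroup.commutator_mono ih le_rfl
    exact hbot (le_bot_iff.mp (hk ▸ hle k))
  refine ⟨part1, ?_⟩
  intro N hNn hNab hNbot hUnr
  haveI := hNn
  set M : Subgroup G := ⁅N, (⊤ : Subgroup G)⁆ with hM
  haveI : M.Normal := Subgroup.commutator_normal N ⊤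
  have hMN : M ≤ N := Subgroup.commutator_le_left N ⊤
  have hMcomm : M ≤ commutator G := Subgroup.commutator_mono le_top le_rfl
  -- part 1 gives M ≠ N, hence an element n ∈ N \ M
  have hMneN : M ≠ N := part1 N hNn hNab hNbot
  obtain ⟨n, hnN, hnM⟩ : ∃ n, n ∈ N ∧ n ∉ M := by
    by_contra h
    push_neg at h
    exact hMneN (le_antisymm hMN h)
  -- a simple rep from separation
  have hsep : ∀ g : G, g ∉ M → ∃ X : FDRep ℂ G, Simple X ∧
      (∀ U : Submodule ℂ X, Stmt7Aux.Inv X.ρ U → U = ⊥ ∨ U = ⊤) ∧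
      (∀ m ∈ M, X.ρ m = 1) ∧ X.ρ g ≠ 1 := by
    intro g hg
    obtain ⟨V, iA, iM, iF, ρ, hρM, hρg⟩ := Stmt7Aux.separation_rep M g hg
    exact Stmt7Aux.sep_aux M g (finrank ℂ V) V iA iM iF ρ le_rfl hρM hρg
  -- X₁ : a linear character not killing n
  obtain ⟨X₁, hS₁, _, hX₁M, hX₁n⟩ := hsep n hnM
  haveI := hS₁
  have hX₁dim : finrank ℂ X₁ = 1 := by
    rcases Stmt7Aux.key N hUnr X₁ hX₁M with h | h
    · exact h
    · exact absurd (h n hnN) hX₁n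
  obtain ⟨τ, hτ⟩ : ∃ τ : G → ℂ, ∀ g : G, X₁.ρ g = τ g • LinearMap.id := by
    choose τ hτ using fun g : G => Stmt7Aux.endo_scalar hX₁dim (X₁.ρ g)
    exact ⟨τ, hτ⟩
  haveI hnt₁ : Nontrivial X₁ := Stmt7Aux.nontrivial_of_simple X₁
  have hτsc : ∀ {a b : ℂ}, a • (LinearMap.id : (X₁ : Type) →ₗ[ℂ] X₁) = b • LinearMap.id → a = b :=
    fun h => Stmt7Aux.scalar_eq hnt₁ h
  have hτmul : ∀ g h : G, τ (g * h) = τ g * τ h := by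
    intro g h
    apply hτsc
    rw [← hτ, map_mul, hτ, hτ]
    ext v
    show τ g • (τ h • v) = (τ g * τ h) • v
    rw [mul_smul]
  have hτone : τ 1 = 1 := by
    apply hτsc
    rw [← hτ, map_one]
    ext v
    simp
  have hτM : ∀ m ∈ M, τ m = 1 := by
    intro m hm
    apply hτsc
    rw [← hτ, hX₁M m hm]
    ext v
    simp
  have hτn : τ n ≠ 1 := by
    intro h
    apply hX₁n
    rw [hτ n, h, one_smul]
    rfl
  have hτinv : ∀ g : G, τ g * τ g⁻¹ = 1 := by
    intro g
    rw [← hτmul, mul_inv_cancel, hτone]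
  -- now show every commutator lies in M
  have hcommM : ∀ a b : G, ⁅a, b⁆ ∈ M := by
    intro a b
    by_contra hab
    obtain ⟨X₂, hS₂, hirr₂, hX₂M, hX₂c⟩ := hsep ⁅a, b⁆ hab
    haveI := hS₂
    haveI hnt₂ : Nontrivial X₂ := Stmt7Aux.nontrivial_of_simple X₂
    -- X₂ cannot be 1-dimensional
    have hdim₂ : finrank ℂ X₂ ≠ 1 := by
      intro h1
      obtain ⟨σ, hσ⟩ : ∃ σ : G → ℂ, ∀ g : G, X₂.ρ g = σ g • LinearMap.id := by
        choose σ hσ using fun g : G => Stmt7Aux.endo_scalar h1 (X₂.ρ g)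
        exact ⟨σ, hσ⟩
      have hσsc : ∀ {x y : ℂ}, x • (LinearMap.id : (X₂ : Type) →ₗ[ℂ] X₂) = y • LinearMap.id →
          x = y := fun h => Stmt7Aux.scalar_eq hnt₂ h
      have hσmul : ∀ g h : G, σ (g * h) = σ g * σ h := by
        intro g h
        apply hσsc
        rw [← hσ, map_mul, hσ, hσ]
        ext v
        show σ g • (σ h • v) = (σ g * σ h) • v
        rw [mul_smul]
      have hσone : σ 1 = 1 := by
        apply hσsc
        rw [← hσ, map_one]
        ext v
        simp
      apply hX₂c
      rw [hσ]
      have : σ ⁅a, b⁆ = 1 := by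
        rw [commutatorElement_def, hσmul, hσmul, hσmul]
        have h1 : σ a * σ a⁻¹ = 1 := by rw [← hσmul, mul_inv_cancel, hσone]
        have h2 : σ b * σ b⁻¹ = 1 := by rw [← hσmul, mul_inv_cancel, hσone]
        calc σ a * σ b * σ a⁻¹ * σ b⁻¹ = (σ a * σ a⁻¹) * (σ b * σ b⁻¹) := by ring
          _ = 1 := by rw [h1, h2, one_mul]
      rw [this, one_smul]
      rfl
    -- X₂ kills N
    have hX₂N : ∀ m ∈ N, X₂.ρ m = 1 := by
      rcases Stmt7Aux.key N hUnr X₂ hX₂M with h | h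
      · exact absurd h hdim₂
      · exact h
    -- twist X₂ by τ
    have hτne : ∀ g : G, τ g ≠ 0 := by
      intro g h0
      have := hτinv g
      rw [h0, zero_mul] at this
      exact zero_ne_one this
    let ρY : Representation ℂ G X₂ :=
      { toFun := fun g => τ g • X₂.ρ g
        map_one' := by
          show τ 1 • X₂.ρ 1 = 1
          rw [hτone, map_one, one_smul]
        map_mul' := fun g h => by
          apply LinearMap.ext
          intro v
          show τ (g * h) • (X₂.ρ (g * h) v) = (τ g • X₂.ρ g) ((τ h • X₂.ρ h) v)
          rw [hτmul, map_mul]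
          show (τ g * τ h) • (X₂.ρ g) ((X₂.ρ h) v) = τ g • (X₂.ρ g) (τ h • (X₂.ρ h) v)
          rw [map_smul, mul_smul] }
    let Y : FDRep ℂ G := FDRep.of ρY
    haveI hSY : Simple Y := by
      apply Stmt7Aux.simple_of_irred
      · exact hnt₂
      · intro U hU
        apply hirr₂ U
        intro g v hv
        have h1 : ρY g v ∈ U := hU g v hv
        have h2 : X₂.ρ g v = (τ g)⁻¹ • ρY g v := by
          show X₂.ρ g v = (τ g)⁻¹ • (τ g • X₂.ρ g v)
          rw [smul_smul, inv_mul_cancel₀ (hτne g), one_smul]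
        rw [h2]
        exact U.smul_mem _ h1
    have hYM : ∀ m ∈ M, Y.ρ m = 1 := by
      intro m hm
      show τ m • X₂.ρ m = 1
      rw [hτM m hm, hX₂M m hm, one_smul]
    have hYdim : finrank ℂ Y = finrank ℂ X₂ := rfl
    rcases Stmt7Aux.key N hUnr Y hYM with h | h
    · rw [hYdim] at h
      exact hdim₂ h
    · have := h n hnN
      have hYn : Y.ρ n = τ n • LinearMap.id := by
        show τ n • X₂.ρ n = _
        rw [hX₂N n hnN]
        rfl
      rw [hYn] at this
      apply hτn
      apply Stmt7Aux.scalar_eq hnt₂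
      rw [this]
      ext v
      simp
  apply le_antisymm
  · exact hMcomm
  · rw [commutator, Subgroup.commutator_le]
    intro g₁ _ g₂ _
    exact hcommM g₁ g₂
end

section
/- Let φ : G → H be a surjective homomorphism of finite groups. Suppose G is unramified over a nontrivial abelian normal subgroup N and M := φ(N) is nontrivial. Then M is an abelian normal subgroup of H and H is unramified over M. -/
open scoped BigOperators

section Pull

open CategoryTheory

variable {G H : Type} [Group G] [Group H]

/-- Pull back a finite-dimensional representation along a group homomorphism. -/
noncomputable def pullFDRep (φ : G →* H) (ρ : FDRep ℂ H) : FDRep ℂ G :=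
  FDRep.of (ρ.ρ.comp φ)

lemma pull_char (φ : G →* H) (ρ : FDRep ℂ H) (g : G) :
    (pullFDRep φ ρ).character g = ρ.character (φ g) := rfl

lemma comm_apply {Y X : FDRep ℂ G} (f : Y ⟶ X) (g : G) (x : ↑Y.V) :
    (f.hom.hom.hom : Y →ₗ[ℂ] X) (Y.ρ g x) = X.ρ g ((f.hom.hom.hom : Y →ₗ[ℂ] X) x) := by
  have := congrArg (fun (t : Y.V ⟶ X.V) => (t.hom.hom : Y →ₗ[ℂ] X) x) (f.comm g)
  exact this

lemma mono_inj {Y X : FDRep ℂ G} (f : Y ⟶ X) [Mono f] :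
    Function.Injective (f.hom.hom.hom : Y →ₗ[ℂ] X) := by
  rw [← LinearMap.ker_eq_bot]
  by_contra hK
  set K := LinearMap.ker (f.hom.hom.hom : Y →ₗ[ℂ] X) with hKdef
  have hstab : ∀ (g : G), ∀ x ∈ K, (Y.ρ g) x ∈ K := by
    intro g x hx
    simp only [hKdef, LinearMap.mem_ker] at hx ⊢
    exact (comm_apply f g x).trans (by rw [hx, map_zero])
  let τ : Representation ℂ G K :=
    { toFun := fun g => (Y.ρ g).restrict (hstab g)
      map_one' := by ext x; simp
      map_mul' := fun a b => by
        ext x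
        show (Y.ρ (a * b)) x.1 = (Y.ρ a) ((Y.ρ b) x.1)
        rw [map_mul]; rfl }
  let K' : FDRep ℂ G := FDRep.of τ
  let ι : K' ⟶ Y := ⟨ConcreteCategory.ofHom (C := FGModuleCat ℂ) (X := K'.V) (Y := Y.V) K.subtype, fun g => by ext x; rfl⟩
  have hcomp : ι ≫ f = (0 : K' ⟶ Y) ≫ f := by
    ext x
    have hx : ((show ↥K from x) : ↑Y.V) ∈ K := (show ↥K from x).2
    simp only [Action.comp_hom, Action.zero_hom]
    show (f.hom.hom.hom : Y →ₗ[ℂ] X) ((K.subtype : ↥K →ₗ[ℂ] ↑Y.V) x) =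
      (f.hom.hom.hom : Y →ₗ[ℂ] X) ((0 : (↥K) →ₗ[ℂ] ↑Y.V) x)
    simp [LinearMap.mem_ker.mp hx]
  have := Mono.right_cancellation (f := f) ι 0 hcomp
  apply hK
  rw [eq_bot_iff]
  intro x hx
  have : (ι.hom.hom.hom : K' →ₗ[ℂ] Y) ⟨x, hx⟩ = 0 := by rw [this]; rfl
  exact this

lemma pullFDRep_simple (φ : G →* H) (hφ : Function.Surjective φ) (ρ : FDRep ℂ H)
    [Simple ρ] : Simple (pullFDRep φ ρ) := by
  constructor
  intro Y f hm
  have hinj : Function.Injective (f.hom.hom.hom : Y →ₗ[ℂ] (pullFDRep φ ρ)) := mono_inj f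
  have key : ∀ g₁ g₂ : G, φ g₁ = φ g₂ → Y.ρ g₁ = Y.ρ g₂ := by
    intro g₁ g₂ hgg
    ext x
    apply hinj
    have h1 := comm_apply f g₁ x
    have h2 := comm_apply f g₂ x
    rw [h1, h2]
    show (ρ.ρ (φ g₁)) _ = (ρ.ρ (φ g₂)) _
    rw [hgg]
  choose s hs using hφ
  have key2 : ∀ g : G, Y.ρ (s (φ g)) = Y.ρ g := fun g => key _ _ (hs _)
  let τ : Representation ℂ H (↑Y.V) :=
    { toFun := fun h => Y.ρ (s h)
      map_one' := by
        have : Y.ρ (s 1) = Y.ρ 1 := key _ _ (by rw [hs, map_one])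
        show Y.ρ (s 1) = 1
        rw [this, map_one]
      map_mul' := fun h₁ h₂ => by
        have : Y.ρ (s (h₁ * h₂)) = Y.ρ (s h₁ * s h₂) := key _ _ (by rw [hs, map_mul, hs, hs])
        show Y.ρ (s (h₁ * h₂)) = Y.ρ (s h₁) * Y.ρ (s h₂)
        rw [this, map_mul] }
  let Y' : FDRep ℂ H := FDRep.of τ
  let f' : Y' ⟶ ρ :=
    { hom := f.hom
      comm := fun h => by
        have h1 := f.comm (s h)
        show Action.ρ Y' h ≫ f.hom = f.hom ≫ Action.ρ ρ h
        have h2 : (ρ.ρ.comp φ) (s h) = ρ.ρ h := by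
          show ρ.ρ (φ (s h)) = ρ.ρ h
          rw [hs]
        have h3 : Action.ρ ρ (φ (s h)) = Action.ρ ρ h := by rw [hs]
        rw [← h3]
        exact h1
    }
  have hmono' : Mono f' := by
    constructor
    intro Z g₁ g₂ hgg
    ext x
    apply hinj
    exact congrArg (fun (t : Z ⟶ ρ) => (t.hom.hom.hom : _ →ₗ[ℂ] _) x) hgg
  constructor
  · intro hiso hf0
    have h1 : (𝟙 (pullFDRep φ ρ) : _ ⟶ _) = 0 :=
      calc (𝟙 (pullFDRep φ ρ) : _ ⟶ _) = inv f ≫ f := (IsIso.inv_hom_id f).symm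
        _ = inv f ≫ 0 := congrArg (fun t => inv f ≫ t) hf0
        _ = 0 := Limits.comp_zero
    have h2 : ∀ x : ↑ρ.V, x = (0 : ↑ρ.V) := by
      intro x
      have := congrArg (fun (t : pullFDRep φ ρ ⟶ pullFDRep φ ρ) =>
        (t.hom.hom.hom : _ →ₗ[ℂ] _) x) h1
      exact this
    have h3 : (𝟙 ρ : ρ ⟶ ρ) = 0 := by
      ext x
      show _ = _
      simpa using h2 x
    exact id_nonzero ρ h3
  · intro hne
    have hne' : f' ≠ 0 := by
      intro h0
      apply hne
      ext x
      have := congrArg (fun (t : Y' ⟶ ρ) => (t.hom.hom.hom : _ →ₗ[ℂ] _) x) h0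
      exact this
    haveI : Mono f' := hmono'
    haveI hiso' : IsIso f' := isIso_of_mono_of_nonzero hne'
    let i := inv f'
    let j : pullFDRep φ ρ ⟶ Y :=
      { hom := i.hom
        comm := fun g => by
          have h1 := i.comm (φ g)
          show Action.ρ (pullFDRep φ ρ) g ≫ i.hom = i.hom ≫ Action.ρ Y g
          rw [show Action.ρ Y g = Action.ρ Y (s (φ g)) from by
            show (_ : Y.V ⟶ Y.V) = _; ext x; exact LinearMap.congr_fun (key2 g).symm x]
          exact h1 }
    have e1 : (f'.hom ≫ i.hom : Y'.V ⟶ Y'.V) = 𝟙 Y'.V := by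
      rw [← Action.comp_hom, IsIso.hom_inv_id, Action.id_hom]
    have e2 : (i.hom ≫ f'.hom : ρ.V ⟶ ρ.V) = 𝟙 ρ.V := by
      rw [← Action.comp_hom, IsIso.inv_hom_id, Action.id_hom]
    have hj1 : f ≫ j = 𝟙 Y := by
      ext x
      exact congrArg (fun (t : Y'.V ⟶ Y'.V) => (t.hom.hom : _ →ₗ[ℂ] _) x) e1
    have hj2 : j ≫ f = 𝟙 (pullFDRep φ ρ) := by
      ext x
      exact congrArg (fun (t : ρ.V ⟶ ρ.V) => (t.hom.hom : _ →ₗ[ℂ] _) x) e2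
    exact ⟨⟨j, hj1, hj2⟩⟩

lemma isIrrChar_comp (φ : G →* H) (hφ : Function.Surjective φ) {χ : H → ℂ}
    (hχ : IsIrrChar H χ) : IsIrrChar G (fun g => χ (φ g)) := by
  obtain ⟨ρ, hs, hc⟩ := hχ
  haveI := hs
  refine ⟨pullFDRep φ ρ, pullFDRep_simple φ hφ ρ, ?_⟩
  funext g
  rw [pull_char, hc]

lemma charInner_comp_surj {G H : Type} [Group G] [Group H] [Finite G] [Finite H]
    (φ : G →* H) (hφ : Function.Surjective φ) (f₁ f₂ : H → ℂ) :
    charInner G (fun g => f₁ (φ g)) (fun g => f₂ (φ g)) = charInner H f₁ f₂ := by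
  classical
  have := Fintype.ofFinite G
  have := Fintype.ofFinite H
  set F : H → ℂ := fun h => f₁ h * (starRingEnd ℂ) (f₂ h) with hF
  have hcard : (Nat.card G : ℂ) = (Nat.card (MonoidHom.ker φ) : ℂ) * (Nat.card H : ℂ) := by
    rw [← Nat.cast_mul]
    congr 1
    rw [Subgroup.card_eq_card_quotient_mul_card_subgroup (MonoidHom.ker φ),
      Nat.card_congr (QuotientGroup.quotientKerEquivOfSurjective φ hφ).toEquiv, mul_comm]
  have hfiber : ∀ h : H, (Finset.univ.filter (fun g : G => φ g = h)).card
      = Nat.card (MonoidHom.ker φ) := by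
    intro h
    rw [← Fintype.card_subtype]
    rw [← Nat.card_eq_fintype_card, Nat.card_congr]
    exact (MonoidHom.fiberEquivKerOfSurjective hφ h)
  have hsum : ∑ g : G, F (φ g) = (Nat.card (MonoidHom.ker φ) : ℂ) * ∑ h : H, F h := by
    rw [Finset.sum_comp]
    have himg : Finset.univ.image φ = (Finset.univ : Finset H) := by
      ext h
      simpa using hφ h
    rw [himg, Finset.mul_sum]
    refine Finset.sum_congr rfl fun h _ => ?_
    rw [hfiber h, nsmul_eq_mul]
  have h0 : (Nat.card (MonoidHom.ker φ) : ℂ) ≠ 0 := by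
    exact_mod_cast (Nat.card_pos (α := MonoidHom.ker φ)).ne'
  rw [charInner, charInner, finsum_eq_sum_of_fintype, finsum_eq_sum_of_fintype]
  show (Nat.card G : ℂ)⁻¹ * ∑ g : G, F (φ g) = (Nat.card H : ℂ)⁻¹ * ∑ h : H, F h
  rw [hsum, hcard]
  calc ((Nat.card (MonoidHom.ker φ) : ℂ) * (Nat.card H : ℂ))⁻¹ *
        ((Nat.card (MonoidHom.ker φ) : ℂ) * ∑ h : H, F h)
      = ((Nat.card (MonoidHom.ker φ) : ℂ)⁻¹ * (Nat.card (MonoidHom.ker φ) : ℂ)) *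
        ((Nat.card H : ℂ)⁻¹ * ∑ h : H, F h) := by rw [mul_inv]; ring
    _ = (Nat.card H : ℂ)⁻¹ * ∑ h : H, F h := by rw [inv_mul_cancel₀ h0, one_mul]

end Pull

/-- Unramifiedness passes to quotients: if φ : G → H is surjective, G is
unramified over the nontrivial abelian normal subgroup N, and M = φ(N) is
nontrivial, then M is an abelian normal subgroup of H and H is unramified
over M. -/
theorem stmt_10 {G H : Type} [Group G] [Group H] [Finite G] [Finite H]
    (φ : G →* H) (hφ : Function.Surjective φ) (N : Subgroup G) [N.Normal]
    (hab : ∀ a b : ↥N, a * b = b * a) (hbot : N ≠ ⊥)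
    (hunr : UnramifiedOver G N) (hMbot : N.map φ ≠ ⊥) :
    (N.map φ).Normal ∧ (∀ a b : ↥(N.map φ), a * b = b * a) ∧
      UnramifiedOver H (N.map φ) := by
  refine ⟨Subgroup.Normal.map inferInstance φ hφ, ?_, ?_⟩
  · rintro ⟨a, ha⟩ ⟨b, hb⟩
    obtain ⟨x, hx, rfl⟩ := ha
    obtain ⟨y, hy, rfl⟩ := hb
    have h1 := hab ⟨x, hx⟩ ⟨y, hy⟩
    have h2 : x * y = y * x := congrArg Subtype.val h1
    ext
    show φ x * φ y = φ y * φ x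
    rw [← map_mul, ← map_mul, h2]
  · intro χ hχ
    have hχ' : IsIrrChar G (fun g => χ (φ g)) := isIrrChar_comp φ hφ hχ
    rcases hunr _ hχ' with hMF | hconst
    · left
      intro μ hμ
      have hμ' : IsIrrChar ↥N (fun n => μ (φ.subgroupMap N n)) :=
        isIrrChar_comp (φ.subgroupMap N) (φ.subgroupMap_surjective N) hμ
      have hres := hMF _ hμ'
      have heq : charInner ↥N (fun n : ↥N => χ ((φ.subgroupMap N n : ↥(N.map φ)) : H))
          (fun n => μ (φ.subgroupMap N n))
          = charInner ↥(N.map φ) (fun m : ↥(N.map φ) => χ (m : H)) μ :=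
        charInner_comp_surj (φ.subgroupMap N) (φ.subgroupMap_surjective N)
          (fun m : ↥(N.map φ) => χ (m : H)) μ
      rw [← heq]
      exact hres
    · right
      rintro ⟨m, hm⟩
      obtain ⟨x, hx, rfl⟩ := hm
      have h3 := hconst ⟨x, hx⟩
      simpa using h3
end

section
/- Let G be a finite group, N a nontrivial abelian normal subgroup over which G is unramified, and M ⊋ N an abelian normal subgroup of G. Then G is unramified over M if and only if G/N is unramified over M/N. -/
open scoped BigOperators

open FDRep LinearMap Module Representation CategoryTheory Function

namespace UR
variable {H : Type} [Group H]

/-- Subrepresentation on an invariant submodule. -/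
noncomputable def subRep (X : FDRep ℂ H) (p : Submodule ℂ X) (hp : ∀ g : H, ∀ x ∈ p, X.ρ g x ∈ p) :
    Representation ℂ H p where
  toFun g := (X.ρ g).restrict (hp g)
  map_one' := by ext x; simp [LinearMap.restrict_apply]
  map_mul' g h := by ext x; simp [LinearMap.restrict_apply]

noncomputable def subRepHom (X : FDRep ℂ H) (p : Submodule ℂ X)
    (hp : ∀ g : H, ∀ x ∈ p, X.ρ g x ∈ p) :
    FDRep.of (subRep X p hp) ⟶ X where
  hom := FGModuleCat.ofHom p.subtype
  comm g := by
    apply FGModuleCat.hom_ext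
    refine LinearMap.ext fun x => ?_
    rfl

instance subRepHomMono (X : FDRep ℂ H) (p : Submodule ℂ X)
    (hp : ∀ g : H, ∀ x ∈ p, X.ρ g x ∈ p) : Mono (subRepHom X p hp) := by
  constructor
  intro Z f g hfg
  apply Action.hom_ext
  apply FGModuleCat.hom_ext
  refine LinearMap.ext fun x => ?_
  have := congrArg (fun (u : Z ⟶ X) => u.hom x) hfg
  simp only [Action.comp_hom] at this
  exact Subtype.ext this

lemma invariant_of_simple (X : FDRep ℂ H) [Simple X] (p : Submodule ℂ X)
    (hp : ∀ g : H, ∀ x ∈ p, X.ρ g x ∈ p) (hne : p ≠ ⊥) : p = ⊤ := by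
  have hι : subRepHom X p hp ≠ 0 := by
    obtain ⟨x, hx, hx0⟩ := Submodule.exists_mem_ne_zero_of_ne_bot hne
    intro h0
    have := congrArg (fun (u : FDRep.of (subRep X p hp) ⟶ X) => u.hom ⟨x, hx⟩) h0
    simp [subRepHom] at this
    exact hx0 (this.trans rfl)
  have hiso : IsIso (subRepHom X p hp) :=
    (Simple.mono_isIso_iff_nonzero (subRepHom X p hp)).mpr hι
  rw [eq_top_iff]
  intro x _
  have h1 : CategoryTheory.inv (subRepHom X p hp) ≫ subRepHom X p hp = 𝟙 X :=
    IsIso.inv_hom_id _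
  have h2 : p.subtype ((CategoryTheory.inv (subRepHom X p hp)).hom x) = x :=
    by
      have := congrArg (fun (u : X ⟶ X) => u.hom x) h1
      simp only [Action.comp_hom, ConcreteCategory.comp_apply, Action.id_hom,
        ConcreteCategory.id_apply] at this
      exact this
  rw [← h2]
  exact ((CategoryTheory.inv (subRepHom X p hp)).hom x).2

lemma nontrivial_of_simple (X : FDRep ℂ H) [Simple X] : Nontrivial X := by
  by_contra h
  have hss : Subsingleton X := not_nontrivial_iff_subsingleton.mp h
  apply CategoryTheory.id_nonzero X
  apply Action.hom_ext
  apply FGModuleCat.hom_ext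
  exact LinearMap.ext fun x => @Subsingleton.elim _ hss _ _

lemma simple_of_invariant (X : FDRep ℂ H) (hnt : Nontrivial X)
    (hinv : ∀ p : Submodule ℂ X, (∀ g : H, ∀ x ∈ p, X.ρ g x ∈ p) → p = ⊥ ∨ p = ⊤) :
    Simple X := by
  constructor
  intro Y f hm
  constructor
  · intro hiso h0
    have h2 : CategoryTheory.inv f ≫ f = 𝟙 X := IsIso.inv_hom_id _
    have h3 : CategoryTheory.inv f ≫ f = 0 := by
      have := congrArg (fun u => CategoryTheory.inv f ≫ u) h0
      exact this.trans Limits.comp_zero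
    have hid : 𝟙 X = (0 : X ⟶ X) := h2.symm.trans h3
    obtain ⟨x, y, hxy⟩ := hnt
    apply hxy
    have hx : x = (0 : X ⟶ X).hom x := congrArg (fun (u : X ⟶ X) => u.hom x) hid
    have hy : y = (0 : X ⟶ X).hom y := congrArg (fun (u : X ⟶ X) => u.hom y) hid
    rw [hx, hy]
    rfl
  · intro hne
    have hf : (f.hom.hom.hom : Y →ₗ[ℂ] X) ≠ 0 := by
      intro h0; exact hne (Action.hom_ext _ _ (FGModuleCat.hom_ext h0))
    have hcomm : ∀ (g : H) (y : Y), f.hom (Y.ρ g y) = X.ρ g (f.hom y) := by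
      intro g y
      exact congrArg (fun (u : Y.V ⟶ X.V) => u y) (f.comm g)
    have hrange : ∀ g : H, ∀ x ∈ LinearMap.range (f.hom.hom.hom : Y →ₗ[ℂ] X), X.ρ g x ∈
        LinearMap.range (f.hom.hom.hom : Y →ₗ[ℂ] X) := by
      intro g x hx
      obtain ⟨y, rfl⟩ := hx
      exact ⟨Y.ρ g y, hcomm g y⟩
    have hrt : LinearMap.range (f.hom.hom.hom : Y →ₗ[ℂ] X) = ⊤ := by
      rcases hinv _ hrange with h | h
      · exact absurd (LinearMap.range_eq_bot.mp h) hf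
      · exact h
    have hker : LinearMap.ker (f.hom.hom.hom : Y →ₗ[ℂ] X) = ⊥ := by
      have hpk : ∀ g : H, ∀ x ∈ LinearMap.ker (f.hom.hom.hom : Y →ₗ[ℂ] X), Y.ρ g x ∈
          LinearMap.ker (f.hom.hom.hom : Y →ₗ[ℂ] X) := by
        intro g x hx
        simp only [LinearMap.mem_ker] at hx ⊢
        exact (hcomm g x).trans (by rw [show (ConcreteCategory.hom f.hom) x = 0 from hx, map_zero])
      have h0 : subRepHom Y _ hpk ≫ f = 0 ≫ f := by
        rw [Limits.zero_comp]
        apply Action.hom_ext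
        apply FGModuleCat.hom_ext
        refine LinearMap.ext fun x => ?_
        exact x.2
      have hcan := (cancel_mono f).mp h0
      rw [Submodule.eq_bot_iff]
      intro x hx
      have h' := congrArg (fun (u : FDRep.of (subRep Y _ hpk) ⟶ Y) => u.hom ⟨x, hx⟩) hcan
      simp [subRepHom] at h'
      exact h'.trans rfl
    have hbij : Function.Bijective (f.hom.hom.hom : Y →ₗ[ℂ] X) :=
      ⟨LinearMap.ker_eq_bot.mp hker, LinearMap.range_eq_top.mp hrt⟩
    let e := LinearEquiv.ofBijective (f.hom.hom.hom : Y →ₗ[ℂ] X) hbij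
    refine ⟨⟨⟨FGModuleCat.ofHom e.symm.toLinearMap, ?_⟩, ?_, ?_⟩⟩
    · intro g
      apply FGModuleCat.hom_ext
      refine LinearMap.ext fun x => ?_
      apply e.injective
      have h1 : f.hom (e.symm (X.ρ g x)) = X.ρ g x := e.apply_symm_apply _
      have h2 : f.hom (e.symm x) = x := e.apply_symm_apply x
      show f.hom (e.symm (X.ρ g x)) = f.hom (Y.ρ g (e.symm x))
      rw [h1, hcomm g (e.symm x), h2]
    · apply Action.hom_ext
      apply FGModuleCat.hom_ext
      refine LinearMap.ext fun y => ?_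
      show e.symm (f.hom y) = y
      exact e.symm_apply_apply y
    · apply Action.hom_ext
      apply FGModuleCat.hom_ext
      refine LinearMap.ext fun x => ?_
      show f.hom (e.symm x) = x
      exact e.apply_symm_apply x
lemma simple_comp_iff {A B : Type} [Group A] [Group B] (f : A →* B) (hf : Function.Surjective f)
    (X : FDRep ℂ B) : Simple (FDRep.of (X.ρ.comp f)) ↔ Simple X := by
  constructor
  · intro h
    refine simple_of_invariant X (nontrivial_of_simple (FDRep.of (X.ρ.comp f))) fun p hp => ?_
    by_cases hb : p = ⊥
    · exact Or.inl hb
    · refine Or.inr (invariant_of_simple (FDRep.of (X.ρ.comp f)) p (fun a x hx => ?_) hb)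
      exact hp (f a) x hx
  · intro h
    refine simple_of_invariant _ (nontrivial_of_simple X) fun p hp => ?_
    by_cases hb : p = ⊥
    · exact Or.inl hb
    · refine Or.inr (invariant_of_simple X p (fun b x hx => ?_) hb)
      obtain ⟨a, rfl⟩ := hf b
      exact hp a x hx

noncomputable def mulEndo {H : Type} [Group H] (X : FDRep ℂ H) (g : H)
    (hcomm : ∀ (h : H) (v : X), X.ρ g (X.ρ h v) = X.ρ h (X.ρ g v)) : X ⟶ X where
  hom := FGModuleCat.ofHom (X.ρ g)
  comm h := FGModuleCat.hom_ext (LinearMap.ext fun v => hcomm h v)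

lemma mulEndo_hom_apply {H : Type} [Group H] (X : FDRep ℂ H) (g : H)
    (hcomm : ∀ (h : H) (v : X), X.ρ g (X.ρ h v) = X.ρ h (X.ρ g v)) (v : X) :
    (mulEndo X g hcomm).hom v = X.ρ g v := rfl

lemma finrank_eq_one_of_simple_abelian {H : Type} [Group H] (hab : ∀ a b : H, a * b = b * a)
    (X : FDRep ℂ H) [Simple X] : finrank ℂ X = 1 := by
  have hnt : Nontrivial X := nontrivial_of_simple X
  obtain ⟨x, hx0⟩ := exists_ne (0 : X)
  have hsc : ∀ g : H, ∃ c : ℂ, ∀ v : X, X.ρ g v = c • v := by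
    intro g
    have hcomm : ∀ (h : H) (v : X), X.ρ g (X.ρ h v) = X.ρ h (X.ρ g v) := by
      intro h v
      rw [← Module.End.mul_apply, ← map_mul, hab g h, map_mul, Module.End.mul_apply]
    obtain ⟨c, hc⟩ := CategoryTheory.endomorphism_simple_eq_smul_id ℂ (mulEndo X g hcomm)
    refine ⟨c, fun v => ?_⟩
    have := congrArg (fun (u : X ⟶ X) => u.hom v) hc
    have h' := this.symm
    simp [mulEndo] at h'
    exact h'.trans rfl
  set p : Submodule ℂ X := ℂ ∙ x with hpdef
  have hinv : ∀ g : H, ∀ y ∈ p, X.ρ g y ∈ p := by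
    intro g y hy
    obtain ⟨c, hc⟩ := hsc g
    rw [hc y]
    exact Submodule.smul_mem p c hy
  have hpbot : p ≠ ⊥ := by
    intro hb
    have hxp : x ∈ p := Submodule.mem_span_singleton_self x
    rw [hb] at hxp
    exact hx0 ((Submodule.mem_bot ℂ).mp hxp)
  have hptop : p = ⊤ := invariant_of_simple X p hinv hpbot
  have h1 : finrank ℂ p = 1 := finrank_span_singleton hx0
  rw [hptop, finrank_top] at h1
  exact h1

lemma simple_of_finrank_one {H : Type} [Group H] (X : FDRep ℂ H) (h : finrank ℂ X = 1) :
    Simple X := by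
  have hnt : Nontrivial X := by
    apply Module.nontrivial_of_finrank_pos (R := ℂ)
    omega
  refine simple_of_invariant X hnt fun p hp => ?_
  have hle : finrank ℂ p ≤ 1 := h ▸ Submodule.finrank_le p
  rcases Nat.le_one_iff_eq_zero_or_eq_one.mp hle with h0 | h1
  · exact Or.inl (Submodule.finrank_eq_zero.mp h0)
  · exact Or.inr (Submodule.eq_top_of_finrank_eq (h1.trans h.symm))

lemma endo_eq_trace_smul_id {V : Type} [AddCommGroup V] [Module ℂ V] [FiniteDimensional ℂ V]
    (h : finrank ℂ V = 1) (f : V →ₗ[ℂ] V) :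
    f = (LinearMap.trace ℂ V f) • LinearMap.id := by
  let b : Basis (Fin 1) ℂ V := Module.basisUnique (Fin 1) h
  have htr : LinearMap.trace ℂ V f = b.repr (f (b 0)) 0 := by
    rw [LinearMap.trace_eq_matrix_trace ℂ b f, Matrix.trace, Fin.sum_univ_one]
    simp [Matrix.diag, LinearMap.toMatrix_apply]
  apply b.ext
  intro i
  have hi : i = 0 := Subsingleton.elim i 0
  subst hi
  have hrepr : f (b 0) = (b.repr (f (b 0)) 0) • b 0 := by
    conv_lhs => rw [← b.sum_repr (f (b 0))]
    rw [Fin.sum_univ_one]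
  rw [hrepr, htr]
  simp

lemma char_mul_of_finrank_one {H : Type} [Group H] (X : FDRep ℂ H) (h : finrank ℂ X = 1)
    (g g' : H) : X.character (g * g') = X.character g * X.character g' := by
  show LinearMap.trace ℂ _ (X.ρ (g * g')) = _
  rw [map_mul]
  conv_lhs => rw [endo_eq_trace_smul_id h (X.ρ g)]
  rw [smul_mul_assoc, ← Module.End.one_eq_id, one_mul, map_smul, smul_eq_mul]
  rfl

lemma char_one_of_finrank_one {H : Type} [Group H] (X : FDRep ℂ H) (h : finrank ℂ X = 1) :
    X.character 1 = 1 := by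
  rw [FDRep.char_one, h, Nat.cast_one]

lemma char_pow_of_finrank_one {H : Type} [Group H] (X : FDRep ℂ H) (h : finrank ℂ X = 1)
    (g : H) (n : ℕ) : X.character (g ^ n) = X.character g ^ n := by
  induction n with
  | zero => simpa [pow_zero] using char_one_of_finrank_one X h
  | succ n ih => rw [pow_succ, pow_succ, char_mul_of_finrank_one X h, ih]

lemma conj_char_of_finrank_one {H : Type} [Group H] [Finite H] (X : FDRep ℂ H)
    (h : finrank ℂ X = 1) (g : H) : (starRingEnd ℂ) (X.character g) = X.character g⁻¹ := by
  have hpow : X.character g ^ orderOf g = 1 := by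
    rw [← char_pow_of_finrank_one X h, pow_orderOf_eq_one, char_one_of_finrank_one X h]
  have hn : orderOf g ≠ 0 := (orderOf_pos g).ne'
  have hnorm : ‖X.character g‖ = 1 := by
    have h1 : ‖X.character g‖ ^ orderOf g = 1 := by rw [← norm_pow, hpow, norm_one]
    rcases lt_trichotomy ‖X.character g‖ 1 with hlt | heq | hgt
    · have := pow_lt_one₀ (norm_nonneg _) hlt hn
      linarith
    · exact heq
    · have := one_lt_pow₀ hgt hn
      linarith
  have hmul : X.character g * X.character g⁻¹ = 1 := by
    rw [← char_mul_of_finrank_one X h, mul_inv_cancel, char_one_of_finrank_one X h]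
  rw [← Complex.inv_eq_conj hnorm]
  exact inv_eq_of_mul_eq_one_right hmul


section InnerMult

variable {H : Type} [Group H] [Fintype H]

lemma charInner_eq (φ ψ : H → ℂ) :
    charInner H φ ψ = (Fintype.card H : ℂ)⁻¹ * ∑ g : H, φ g * (starRingEnd ℂ) (ψ g) := by
  rw [charInner, Nat.card_eq_fintype_card, finsum_eq_sum_of_fintype]

lemma average_char (X : FDRep ℂ H) :
    (Fintype.card H : ℂ)⁻¹ * ∑ g : H, X.character g =
      (finrank ℂ (invariants X.ρ) : ℂ) := by
  haveI : Invertible ((Fintype.card H : ℂ)) :=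
    invertibleOfNonzero (Nat.cast_ne_zero.mpr Fintype.card_ne_zero)
  have h := FDRep.average_char_eq_finrank_invariants X
  rwa [Nat.card_eq_fintype_card] at h

variable {V W : Type} [AddCommGroup V] [Module ℂ V] [FiniteDimensional ℂ V]
  [AddCommGroup W] [Module ℂ W] [FiniteDimensional ℂ W]

noncomputable def mult (ρ : Representation ℂ H V) (σ : Representation ℂ H W) : ℕ :=
  finrank ℂ (invariants (ρ.tprod σ.dual))

lemma charInner_character_eq_mult (ρ : Representation ℂ H V) (σ : Representation ℂ H W)
    (hW : finrank ℂ W = 1) :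
    charInner H (FDRep.of ρ).character (FDRep.of σ).character = (mult ρ σ : ℂ) := by
  rw [charInner_eq]
  have h1 : ∀ g : H, (FDRep.of ρ).character g * (starRingEnd ℂ) ((FDRep.of σ).character g)
      = (FDRep.of (ρ.tprod σ.dual)).character g := by
    intro g
    rw [conj_char_of_finrank_one (FDRep.of σ) hW g]
    show LinearMap.trace ℂ V (ρ g) * LinearMap.trace ℂ W (σ g⁻¹)
        = LinearMap.trace ℂ _ ((ρ.tprod σ.dual) g)
    rw [Representation.tprod_apply, trace_tensorProduct', Representation.dual_apply,
      trace_transpose']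
  rw [Finset.sum_congr rfl fun g _ => h1 g]
  have h2 := average_char (FDRep.of (ρ.tprod σ.dual))
  rw [h2]
  rfl

lemma invariants_comp_le {A B : Type} [Group A] [Group B] (f : A →* B)
    {U : Type} [AddCommGroup U] [Module ℂ U] (τ : Representation ℂ B U) :
    invariants τ ≤ invariants (τ.comp f) := fun _x hx g => hx (f g)

lemma mult_comp_le {A B : Type} [Group A] [Group B] [Fintype A] [Fintype B] (f : A →* B)
    (ρ : Representation ℂ B V) (σ : Representation ℂ B W) :
    mult ρ σ ≤ mult (ρ.comp f) (σ.comp f) := by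
  have he : Representation.tprod (ρ.comp f) (Representation.dual (σ.comp f))
      = (Representation.tprod ρ (Representation.dual σ)).comp f := by
    apply MonoidHom.ext
    intro a
    rw [Representation.tprod_apply, MonoidHom.comp_apply, MonoidHom.comp_apply, Representation.tprod_apply]
    congr 1
    rw [Representation.dual_apply, Representation.dual_apply]
    congr 1
    show σ (f a⁻¹) = σ (f a)⁻¹
    rw [map_inv]
  rw [mult, mult, he]
  exact Submodule.finrank_mono (invariants_comp_le f _)

lemma rho_eq_one_of_char_const (σ : Representation ℂ H V)
    (h : ∀ g : H, LinearMap.trace ℂ V (σ g) = (finrank ℂ V : ℂ)) : ∀ g : H, σ g = 1 := by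
  have havg := average_char (FDRep.of σ)
  have hc : (Fintype.card H : ℂ) ≠ 0 := Nat.cast_ne_zero.mpr Fintype.card_ne_zero
  have hsum0 : ∑ g : H, (FDRep.of σ).character g = ∑ _g : H, ((finrank ℂ V : ℂ)) :=
    Finset.sum_congr rfl fun g _ => h g
  have hsum : ∑ g : H, (FDRep.of σ).character g = (Fintype.card H : ℂ) * (finrank ℂ V : ℂ) := by
    rw [hsum0, Finset.sum_const, Finset.card_univ, nsmul_eq_mul]
  rw [hsum, ← mul_assoc, inv_mul_cancel₀ hc, one_mul] at havg
  have hrank : finrank ℂ (invariants ((FDRep.of σ).ρ)) = finrank ℂ V := by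
    exact_mod_cast havg.symm
  have htop : invariants σ = ⊤ := Submodule.eq_top_of_finrank_eq hrank
  intro g
  refine LinearMap.ext fun v => ?_
  have hv : v ∈ invariants σ := htop ▸ Submodule.mem_top
  exact (hv g).trans (Module.End.one_apply v).symm

end InnerMult

section Descend

variable {A B : Type} [Group A] [Group B]
variable {V : Type} [AddCommGroup V] [Module ℂ V] [FiniteDimensional ℂ V]

noncomputable def descendRep (f : A →* B) (hf : Function.Surjective f)
    (σ : Representation ℂ A V) (hker : ∀ a : A, f a = 1 → σ a = 1) :
    Representation ℂ B V :=
  (Units.coeHom (V →ₗ[ℂ] V)).comp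
    ((f.liftOfRightInverse (Function.surjInv hf) (Function.rightInverse_surjInv hf))
      ⟨σ.toHomUnits, fun a ha => by
        have h1 : σ a = 1 := hker a ha
        have : σ.toHomUnits a = 1 := Units.ext (by
          rw [MonoidHom.coe_toHomUnits]; exact h1)
        exact this⟩)

lemma descendRep_comp_apply (f : A →* B) (hf : Function.Surjective f)
    (σ : Representation ℂ A V) (hker : ∀ a : A, f a = 1 → σ a = 1) (a : A) :
    descendRep f hf σ hker (f a) = σ a := by
  have h := f.liftOfRightInverse_comp_apply (Function.surjInv hf)
    (Function.rightInverse_surjInv hf) ⟨σ.toHomUnits, fun a ha => Units.ext (by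
      rw [MonoidHom.coe_toHomUnits]; exact hker a ha)⟩ a
  show (Units.coeHom (V →ₗ[ℂ] V)) _ = σ a
  rw [h]
  exact MonoidHom.coe_toHomUnits σ a

end Descend

section SumHom

variable {A B : Type} [Group A] [Group B] [Fintype A] [Fintype B]

lemma inner_sum_hom (f : A →* B) (hf : Function.Surjective f) (φ : B → ℂ) :
    (Fintype.card A : ℂ)⁻¹ * ∑ a : A, φ (f a) =
      (Fintype.card B : ℂ)⁻¹ * ∑ b : B, φ b := by
  classical
  haveI : Fintype f.ker := Fintype.ofFinite _
  have hs : ∀ b, f (Function.surjInv hf b) = b := fun b => Function.surjInv_eq hf b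
  let e : A ≃ B × f.ker :=
    { toFun := fun a => (f a, ⟨(Function.surjInv hf (f a))⁻¹ * a, by
        rw [MonoidHom.mem_ker, map_mul, map_inv, hs]
        exact inv_mul_cancel _⟩)
      invFun := fun p => Function.surjInv hf p.1 * p.2
      left_inv := fun a => by simp
      right_inv := fun p => by
        ext
        · show f (Function.surjInv hf p.1 * p.2) = p.1
          rw [map_mul, hs]
          have : f p.2 = 1 := p.2.2
          rw [this, mul_one]
        · show (Function.surjInv hf (f (Function.surjInv hf p.1 * p.2)))⁻¹ *
            (Function.surjInv hf p.1 * p.2) = (p.2 : A)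
          have : f (Function.surjInv hf p.1 * p.2) = p.1 := by
            rw [map_mul, hs]
            have : f p.2 = 1 := p.2.2
            rw [this, mul_one]
          rw [this, inv_mul_cancel_left] }
  have hcard : Fintype.card A = Fintype.card B * Fintype.card f.ker := by
    rw [Fintype.card_congr e, Fintype.card_prod]
  have hsum : ∑ a : A, φ (f a) = ∑ p : B × f.ker, φ p.1 :=
    Fintype.sum_equiv e _ _ (fun a => rfl)
  rw [hsum, Fintype.sum_prod_type]
  have hA : (Fintype.card A : ℂ) = (Fintype.card B : ℂ) * (Fintype.card f.ker : ℂ) := by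
    exact_mod_cast congrArg (Nat.cast : ℕ → ℂ) hcard
  have hk : (Fintype.card f.ker : ℂ) ≠ 0 := Nat.cast_ne_zero.mpr Fintype.card_ne_zero
  have h1 : ∑ b : B, ∑ _k : f.ker, φ b = (Fintype.card f.ker : ℂ) * ∑ b : B, φ b := by
    have : ∀ b : B, ∑ _k : f.ker, φ b = (Fintype.card f.ker : ℂ) * φ b := by
      intro b
      rw [Finset.sum_const, Finset.card_univ, nsmul_eq_mul]
    rw [Finset.sum_congr rfl fun b _ => this b, Finset.mul_sum]
  rw [h1, hA, mul_inv_rev]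
  have h2 : ((Fintype.card f.ker : ℂ))⁻¹ * ((Fintype.card B : ℂ))⁻¹ *
      ((Fintype.card f.ker : ℂ) * ∑ b : B, φ b) =
      ((Fintype.card B : ℂ))⁻¹ * (((Fintype.card f.ker : ℂ))⁻¹ * (Fintype.card f.ker : ℂ)) *
        ∑ b : B, φ b := by ring
  rw [h2, inv_mul_cancel₀ hk, mul_one]

lemma charInner_comp_surjective (f : A →* B) (hf : Function.Surjective f) (φ ψ : B → ℂ) :
    charInner A (fun a => φ (f a)) (fun a => ψ (f a)) = charInner B φ ψ := by
  rw [charInner_eq, charInner_eq]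
  exact inner_sum_hom f hf (fun b => φ b * (starRingEnd ℂ) (ψ b))

end SumHom

end UR

/-- If G is unramified over N and N ⊊ M with M abelian normal, then G is
unramified over M iff G/N is unramified over M/N. -/
theorem stmt_11 {G : Type} [Group G] [Finite G] (N M : Subgroup G)
    [N.Normal] [M.Normal] (habN : ∀ a b : ↥N, a * b = b * a)
    (habM : ∀ a b : ↥M, a * b = b * a) (hbot : N ≠ ⊥) (hNM : N < M)
    (hunr : UnramifiedOver G N) :
    UnramifiedOver G M ↔
      UnramifiedOver (G ⧸ N) (M.map (QuotientGroup.mk' N)) := by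
  classical
  letI : Fintype G := Fintype.ofFinite G
  letI : Fintype ↥M := Fintype.ofFinite ↥M
  letI : Fintype ↥N := Fintype.ofFinite ↥N
  letI : Fintype (G ⧸ N) := Fintype.ofFinite _
  letI : Fintype ↥(M.map (QuotientGroup.mk' N)) := Fintype.ofFinite _
  have hπ : Function.Surjective ⇑(QuotientGroup.mk' N) := QuotientGroup.mk'_surjective N
  have hfM : Function.Surjective ⇑((QuotientGroup.mk' N).subgroupMap M) :=
    MonoidHom.subgroupMap_surjective (QuotientGroup.mk' N) M
  constructor
  · -- forward
    intro hM χb hχb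
    obtain ⟨Xb, hXbs, rfl⟩ := hχb
    haveI hXls : CategoryTheory.Simple (FDRep.of (Xb.ρ.comp (QuotientGroup.mk' N))) :=
      (UR.simple_comp_iff (QuotientGroup.mk' N) hπ Xb).mpr hXbs
    have hlift : IsIrrChar G (fun g => Xb.character (QuotientGroup.mk' N g)) :=
      ⟨_, hXls, rfl⟩
    rcases hM _ hlift with hmf | hconst
    · left
      intro μb hμb
      obtain ⟨Yb, hYbs, rfl⟩ := hμb
      haveI hYls : CategoryTheory.Simple
          (FDRep.of (Yb.ρ.comp ((QuotientGroup.mk' N).subgroupMap M))) :=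
        (UR.simple_comp_iff ((QuotientGroup.mk' N).subgroupMap M) hfM Yb).mpr hYbs
      have hμM : IsIrrChar ↥M (fun m => Yb.character ((QuotientGroup.mk' N).subgroupMap M m)) :=
        ⟨_, hYls, rfl⟩
      have h01 := hmf _ hμM
      rw [← UR.charInner_comp_surjective ((QuotientGroup.mk' N).subgroupMap M) hfM
        (fun mb => Xb.character ↑mb) Yb.character]
      exact h01
    · right
      intro mb
      obtain ⟨m, hm, hmeq⟩ := mb.2
      have h2 := hconst ⟨m, hm⟩
      calc Xb.character ↑mb = Xb.character (QuotientGroup.mk' N m) := by rw [hmeq]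
        _ = Xb.character (QuotientGroup.mk' N 1) := h2
        _ = Xb.character 1 := by rw [map_one]
  · -- backward
    intro hQ χ hχ
    obtain ⟨X, hXs, rfl⟩ := hχ
    haveI := hXs
    rcases hunr X.character ⟨X, hXs, rfl⟩ with hmfN | htriv
    · -- Case 1: restriction to N is multiplicity free
      left
      intro μ hμ
      obtain ⟨Y, hYs, rfl⟩ := hμ
      haveI := hYs
      have hY1 : finrank ℂ Y = 1 := UR.finrank_eq_one_of_simple_abelian habM Y
      haveI hZs : CategoryTheory.Simple (FDRep.of (Y.ρ.comp (Subgroup.inclusion hNM.le))) :=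
        UR.simple_of_finrank_one _ hY1
      have hμN : IsIrrChar ↥N (fun n => Y.character (Subgroup.inclusion hNM.le n)) :=
        ⟨_, hZs, rfl⟩
      have h01N := hmfN _ hμN
      have hiM : charInner ↥M (fun m : ↥M => X.character ↑m) Y.character
          = (UR.mult (X.ρ.comp M.subtype) Y.ρ : ℂ) :=
        UR.charInner_character_eq_mult (X.ρ.comp M.subtype) Y.ρ hY1
      have hiN : charInner ↥N (fun n : ↥N => X.character ↑n)
            (fun n => Y.character (Subgroup.inclusion hNM.le n))
          = (UR.mult (X.ρ.comp N.subtype) (Y.ρ.comp (Subgroup.inclusion hNM.le)) : ℂ) :=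
        UR.charInner_character_eq_mult (X.ρ.comp N.subtype)
          (Y.ρ.comp (Subgroup.inclusion hNM.le)) hY1
      have hle : UR.mult (X.ρ.comp M.subtype) Y.ρ
          ≤ UR.mult (X.ρ.comp N.subtype) (Y.ρ.comp (Subgroup.inclusion hNM.le)) := by
        have h := UR.mult_comp_le (Subgroup.inclusion hNM.le) (X.ρ.comp M.subtype) Y.ρ
        have hcomp : (X.ρ.comp M.subtype).comp (Subgroup.inclusion hNM.le)
            = X.ρ.comp N.subtype := by
          rw [MonoidHom.comp_assoc, Subgroup.subtype_comp_inclusion]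
        rwa [hcomp] at h
      rcases h01N with h0 | h1c
      · rw [hiN] at h0
        have hz : UR.mult (X.ρ.comp N.subtype) (Y.ρ.comp (Subgroup.inclusion hNM.le)) = 0 := by
          exact_mod_cast h0
        have hz2 : UR.mult (X.ρ.comp M.subtype) Y.ρ = 0 := by omega
        left; rw [hiM, hz2]; norm_num
      · rw [hiN] at h1c
        have ho : UR.mult (X.ρ.comp N.subtype) (Y.ρ.comp (Subgroup.inclusion hNM.le)) = 1 := by
          exact_mod_cast h1c
        have : UR.mult (X.ρ.comp M.subtype) Y.ρ = 0 ∨ UR.mult (X.ρ.comp M.subtype) Y.ρ = 1 := by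
          omega
        rcases this with h | h
        · left; rw [hiM, h]; norm_num
        · right; rw [hiM, h]; norm_num
    · -- Case 2: restriction to N is a multiple of the trivial character
      have hone : ∀ n : ↥N, X.ρ ↑n = 1 := by
        have hcc := UR.rho_eq_one_of_char_const (H := ↥N) (X.ρ.comp N.subtype) (fun n => by
          have h1 := htriv n
          have h2 : X.character 1 = ((finrank ℂ X : ℕ) : ℂ) := FDRep.char_one X
          exact h1.trans h2)
        exact fun n => hcc n
      have hkerX : ∀ g : G, QuotientGroup.mk' N g = 1 → X.ρ g = 1 := by
        intro g hg
        exact hone ⟨g, (QuotientGroup.eq_one_iff g).mp hg⟩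
      have hcompX : ∀ g : G,
          UR.descendRep (QuotientGroup.mk' N) hπ X.ρ hkerX (QuotientGroup.mk' N g) = X.ρ g :=
        fun g => UR.descendRep_comp_apply (QuotientGroup.mk' N) hπ X.ρ hkerX g
      have heX : (UR.descendRep (QuotientGroup.mk' N) hπ X.ρ hkerX).comp (QuotientGroup.mk' N)
          = X.ρ := MonoidHom.ext hcompX
      haveI hXbs : CategoryTheory.Simple
          (FDRep.of (UR.descendRep (QuotientGroup.mk' N) hπ X.ρ hkerX)) := by
        have h3 : FDRep.of ((UR.descendRep (QuotientGroup.mk' N) hπ X.ρ hkerX).comp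
            (QuotientGroup.mk' N)) = FDRep.of X.ρ := congrArg FDRep.of heX
        haveI h4 : CategoryTheory.Simple (FDRep.of
            ((UR.descendRep (QuotientGroup.mk' N) hπ X.ρ hkerX).comp (QuotientGroup.mk' N))) := by
          rw [h3]; exact hXs
        exact (UR.simple_comp_iff (QuotientGroup.mk' N) hπ
          (FDRep.of (UR.descendRep (QuotientGroup.mk' N) hπ X.ρ hkerX))).mp h4
      have hcc : ∀ g : G,
          (FDRep.of (UR.descendRep (QuotientGroup.mk' N) hπ X.ρ hkerX)).character
            (QuotientGroup.mk' N g) = X.character g := by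
        intro g
        show LinearMap.trace ℂ _ (UR.descendRep (QuotientGroup.mk' N) hπ X.ρ hkerX
          (QuotientGroup.mk' N g)) = _
        rw [hcompX g]
        rfl
      rcases hQ _ (⟨_, hXbs, rfl⟩ : IsIrrChar (G ⧸ N)
          (FDRep.of (UR.descendRep (QuotientGroup.mk' N) hπ X.ρ hkerX)).character)
        with hmfb | hconstb
      · left
        intro μ hμ
        obtain ⟨Y, hYs, rfl⟩ := hμ
        haveI := hYs
        have hY1 : finrank ℂ Y = 1 := UR.finrank_eq_one_of_simple_abelian habM Y
        by_cases hν : ∀ (n : G) (hn : n ∈ N), Y.character ⟨n, hNM.le hn⟩ = 1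
        · -- μ trivial on N : descend and use hmfb
          have hkerY : ∀ m : ↥M, (QuotientGroup.mk' N).subgroupMap M m = 1 → Y.ρ m = 1 := by
            intro m hm
            have h1 : QuotientGroup.mk' N ↑m = 1 := by
              have h0 : (((QuotientGroup.mk' N).subgroupMap M m : ↥(M.map (QuotientGroup.mk' N)))
                  : G ⧸ N) = QuotientGroup.mk' N ↑m := rfl
              rw [← h0, hm]
              rfl
            have h2 : (↑m : G) ∈ N := (QuotientGroup.eq_one_iff _).mp h1
            have h3 : Y.character m = 1 := hν ↑m h2
            have h4 := UR.endo_eq_trace_smul_id (V := ↥Y) hY1 (Y.ρ m)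
            rw [show LinearMap.trace ℂ ↥Y (Y.ρ m) = Y.character m from rfl, h3, one_smul] at h4
            exact h4
          have hcompY : ∀ m : ↥M,
              UR.descendRep ((QuotientGroup.mk' N).subgroupMap M) hfM Y.ρ hkerY
                ((QuotientGroup.mk' N).subgroupMap M m) = Y.ρ m :=
            fun m => UR.descendRep_comp_apply _ hfM Y.ρ hkerY m
          have heY : (UR.descendRep ((QuotientGroup.mk' N).subgroupMap M) hfM Y.ρ hkerY).comp
              ((QuotientGroup.mk' N).subgroupMap M) = Y.ρ := MonoidHom.ext hcompY
          haveI hYbs : CategoryTheory.Simple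
              (FDRep.of (UR.descendRep ((QuotientGroup.mk' N).subgroupMap M) hfM Y.ρ hkerY)) := by
            have h3 : FDRep.of ((UR.descendRep ((QuotientGroup.mk' N).subgroupMap M) hfM Y.ρ
                hkerY).comp ((QuotientGroup.mk' N).subgroupMap M)) = FDRep.of Y.ρ :=
              congrArg FDRep.of heY
            haveI h4 : CategoryTheory.Simple (FDRep.of ((UR.descendRep
                ((QuotientGroup.mk' N).subgroupMap M) hfM Y.ρ hkerY).comp
                ((QuotientGroup.mk' N).subgroupMap M))) := by
              rw [h3]; exact hYs
            exact (UR.simple_comp_iff ((QuotientGroup.mk' N).subgroupMap M) hfM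
              (FDRep.of (UR.descendRep ((QuotientGroup.mk' N).subgroupMap M) hfM Y.ρ hkerY))).mp h4
          have h01 := hmfb _ (⟨_, hYbs, rfl⟩ : IsIrrChar ↥(M.map (QuotientGroup.mk' N))
            (FDRep.of (UR.descendRep ((QuotientGroup.mk' N).subgroupMap M) hfM Y.ρ
              hkerY)).character)
          have h1 := UR.charInner_comp_surjective ((QuotientGroup.mk' N).subgroupMap M) hfM
            (fun mb : ↥(M.map (QuotientGroup.mk' N)) =>
              (FDRep.of (UR.descendRep (QuotientGroup.mk' N) hπ X.ρ hkerX)).character ↑mb)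
            ((FDRep.of (UR.descendRep ((QuotientGroup.mk' N).subgroupMap M) hfM Y.ρ
              hkerY)).character)
          have h2 : (fun m : ↥M => (FDRep.of (UR.descendRep (QuotientGroup.mk' N) hπ X.ρ
              hkerX)).character ↑(((QuotientGroup.mk' N).subgroupMap M) m))
              = fun m : ↥M => X.character ↑m := by
            funext m
            exact hcc ↑m
          have h3 : (fun m : ↥M => (FDRep.of (UR.descendRep ((QuotientGroup.mk' N).subgroupMap M)
              hfM Y.ρ hkerY)).character (((QuotientGroup.mk' N).subgroupMap M) m))
              = Y.character := by
            funext m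
            show LinearMap.trace ℂ _ (UR.descendRep ((QuotientGroup.mk' N).subgroupMap M) hfM Y.ρ
              hkerY (((QuotientGroup.mk' N).subgroupMap M) m)) = _
            rw [hcompY m]
            rfl
          rw [h2, h3] at h1
          rw [h1]
          exact h01
        · -- μ nontrivial on N : inner product vanishes
          push_neg at hν
          obtain ⟨n, hn, hne⟩ := hν
          left
          rw [UR.charInner_eq]
          have hXn : ∀ m : ↥M, X.character ↑(m * (⟨n, hNM.le hn⟩ : ↥M)) = X.character ↑m := by
            intro m
            show LinearMap.trace ℂ _ (X.ρ (↑m * n)) = _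
            rw [map_mul, show X.ρ n = 1 from hone ⟨n, hn⟩, mul_one]
            rfl
          have hYn : ∀ m : ↥M, Y.character (m * (⟨n, hNM.le hn⟩ : ↥M))
              = Y.character m * Y.character ⟨n, hNM.le hn⟩ :=
            fun m => UR.char_mul_of_finrank_one Y hY1 m _
          have hSeq : (∑ m : ↥M, X.character ↑m * (starRingEnd ℂ) (Y.character m))
              = (starRingEnd ℂ) (Y.character ⟨n, hNM.le hn⟩) *
                ∑ m : ↥M, X.character ↑m * (starRingEnd ℂ) (Y.character m) := by
            have hre : (∑ m : ↥M, X.character ↑m * (starRingEnd ℂ) (Y.character m))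
                = ∑ m : ↥M, X.character ↑(m * (⟨n, hNM.le hn⟩ : ↥M)) *
                  (starRingEnd ℂ) (Y.character (m * (⟨n, hNM.le hn⟩ : ↥M))) :=
              (Fintype.sum_equiv (Equiv.mulRight (⟨n, hNM.le hn⟩ : ↥M)) _ _ (fun m => rfl)).symm
            conv_lhs => rw [hre]
            rw [Finset.mul_sum]
            apply Finset.sum_congr rfl
            intro m _
            rw [hXn m, hYn m, map_mul]
            ring
          have hS0 : (∑ m : ↥M, X.character ↑m * (starRingEnd ℂ) (Y.character m)) = 0 := by
            by_contra h
            have hc : (starRingEnd ℂ) (Y.character ⟨n, hNM.le hn⟩) = 1 := by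
              have h1 : (1 - (starRingEnd ℂ) (Y.character ⟨n, hNM.le hn⟩)) *
                  (∑ m : ↥M, X.character ↑m * (starRingEnd ℂ) (Y.character m)) = 0 := by
                rw [sub_mul, one_mul, ← hSeq, sub_self]
              rcases mul_eq_zero.mp h1 with h2 | h2
              · exact (sub_eq_zero.mp h2).symm
              · exact absurd h2 h
            apply hne
            have h5 := congrArg (starRingEnd ℂ) hc
            rwa [Complex.conj_conj, map_one] at h5
          show (Fintype.card ↥M : ℂ)⁻¹ *
            (∑ m : ↥M, X.character ↑m * (starRingEnd ℂ) (Y.character m)) = 0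
          rw [hS0, mul_zero]
      · -- constant on M/N implies constant on M
        right
        intro m
        have hmem : QuotientGroup.mk' N ↑m ∈ M.map (QuotientGroup.mk' N) := ⟨↑m, m.2, rfl⟩
        have h1 := hconstb ⟨QuotientGroup.mk' N ↑m, hmem⟩
        have h2 : (FDRep.of (UR.descendRep (QuotientGroup.mk' N) hπ X.ρ hkerX)).character
            (1 : G ⧸ N) = X.character 1 := by
          have h3 := hcc 1
          rwa [map_one] at h3
        calc X.character ↑m
            = (FDRep.of (UR.descendRep (QuotientGroup.mk' N) hπ X.ρ hkerX)).character
              (QuotientGroup.mk' N ↑m) := (hcc ↑m).symm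
          _ = (FDRep.of (UR.descendRep (QuotientGroup.mk' N) hπ X.ρ hkerX)).character
              (1 : G ⧸ N) := h1
          _ = X.character 1 := h2
end

section
/- Let G be a finite group whose commutator subgroup G′ is abelian and satisfies G′ ≠ [G,G,G] (equivalently [N,G] ≠ N for N = G′). Then G is not pseudo-unramified over G′: there exists a G-invariant linear character μ of G′ such that no irreducible character χ of G lying over μ has multiplicity-free restriction χ|_{G′}. -/
open scoped BigOperators

open CategoryTheory

noncomputable section

lemma charInner_eq_sum (H : Type) [Group H] [Fintype H] (φ ψ : H → ℂ) :
    charInner H φ ψ = (Fintype.card H : ℂ)⁻¹ * ∑ h, φ h * (starRingEnd ℂ) (ψ h) := by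
  rw [charInner, finsum_eq_sum_of_fintype, Nat.card_eq_fintype_card]

variable {H : Type} [Group H]

lemma fdrep_comm_apply {Y W : FDRep ℂ H} (f : Y ⟶ W) (h : H) (y : Y) :
    (f.hom.hom.hom : (Y : Type) →ₗ[ℂ] (W : Type)) (Y.ρ h y)
      = W.ρ h ((f.hom.hom.hom : (Y : Type) →ₗ[ℂ] (W : Type)) y) :=
  LinearMap.congr_fun (congrArg (fun k => k.hom.hom) (f.comm h)) y

def kerSub {Y W : FDRep ℂ H} (f : Y ⟶ W) : Submodule ℂ (Y : Type) :=
  LinearMap.ker (f.hom.hom.hom : (Y : Type) →ₗ[ℂ] (W : Type))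

def kerRep {Y W : FDRep ℂ H} (f : Y ⟶ W) : FDRep ℂ H :=
  FDRep.of (V := kerSub f)
    { toFun := fun h => (Y.ρ h).restrict (p := kerSub f) (q := kerSub f) (by
          intro x hx
          have hx' : (f.hom.hom.hom : (Y : Type) →ₗ[ℂ] (W : Type)) x = 0 := hx
          show (f.hom.hom.hom : (Y : Type) →ₗ[ℂ] (W : Type)) (Y.ρ h x) = 0
          rw [fdrep_comm_apply, hx', map_zero])
      map_one' := by ext v; simp [LinearMap.restrict_apply]
      map_mul' := fun x y => by
        ext v; simp [LinearMap.restrict_apply, Module.End.mul_apply] }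

def kerRepHom {Y W : FDRep ℂ H} (f : Y ⟶ W) : kerRep f ⟶ Y where
  hom := FGModuleCat.ofHom (kerSub f).subtype
  comm := fun g => by
    ext v
    rfl

lemma injective_of_mono {Y W : FDRep ℂ H} (f : Y ⟶ W) [Mono f] :
    Function.Injective (f.hom.hom.hom : (Y : Type) →ₗ[ℂ] (W : Type)) := by
  have h0 : kerRepHom f ≫ f = 0 ≫ f := by
    ext v
    show (f.hom.hom.hom : (Y : Type) →ₗ[ℂ] (W : Type)) ((kerSub f).subtype v) = _
    have : (f.hom.hom.hom : (Y : Type) →ₗ[ℂ] (W : Type)) v.1 = 0 := v.2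
    simp [this]
  have := (cancel_mono f).mp h0
  rw [← LinearMap.ker_eq_bot]
  rw [Submodule.eq_bot_iff]
  intro x hx
  have : (kerSub f).subtype ⟨x, hx⟩ = ((0 : kerRep f ⟶ Y).hom.hom.hom : (kerRep f : Type) →ₗ[ℂ] (Y : Type)) ⟨x, hx⟩ := by
    rw [← this]; rfl
  exact this

def oneRep (φ : H →* ℂˣ) : Representation ℂ H ℂ where
  toFun h := (φ h : ℂ) • LinearMap.id
  map_one' := by ext v; simp
  map_mul' x y := by ext v; simp [mul_comm]

def oneFDRep (φ : H →* ℂˣ) : FDRep ℂ H := FDRep.of (oneRep φ)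

lemma oneFDRep_char (φ : H →* ℂˣ) (h : H) :
    (oneFDRep φ).character h = (φ h : ℂ) := by
  have : (oneFDRep φ).character h
      = LinearMap.trace ℂ ℂ ((φ h : ℂ) • LinearMap.id) := rfl
  rw [this]; simp

instance oneFDRep_simple (φ : H →* ℂˣ) : Simple (oneFDRep φ) := by
  constructor
  intro Y f hm
  constructor
  · intro hiso h0
    have h1 : inv f ≫ f = 𝟙 (oneFDRep φ) := IsIso.inv_hom_id f
    subst h0
    rw [Limits.comp_zero] at h1
    have h2 : ((𝟙 (oneFDRep φ) : oneFDRep φ ⟶ oneFDRep φ).hom.hom.hom :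
        (oneFDRep φ : Type) →ₗ[ℂ] (oneFDRep φ : Type)) (1 : ℂ) = (1 : ℂ) := rfl
    rw [← h1] at h2
    have h3 : ((0 : oneFDRep φ ⟶ oneFDRep φ).hom.hom.hom :
        (oneFDRep φ : Type) →ₗ[ℂ] (oneFDRep φ : Type)) (1 : ℂ) = (0 : ℂ) := rfl
    rw [h2] at h3
    exact one_ne_zero (α := ℂ) h3
  · intro hne
    let fh : (Y : Type) →ₗ[ℂ] ℂ := f.hom.hom.hom
    have hinj : Function.Injective fh := injective_of_mono f
    have hfhne : fh ≠ 0 := by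
      intro h
      apply hne
      ext1
      ext1
      exact h
    have hsurj : Function.Surjective fh := by
      obtain ⟨x, hx⟩ : ∃ x, fh x ≠ 0 := by
        by_contra hc
        push_neg at hc
        exact hfhne (LinearMap.ext hc)
      intro c
      exact ⟨((c / fh x : ℂ)) • x, by rw [map_smul, smul_eq_mul]; field_simp⟩
    let e : (Y : Type) ≃ₗ[ℂ] ℂ := LinearEquiv.ofBijective fh ⟨hinj, hsurj⟩
    have : IsIso f.hom := by
      refine ⟨FGModuleCat.ofHom (e.symm.toLinearMap : ℂ →ₗ[ℂ] (Y : Type)), ?_, ?_⟩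
      · ext v
        exact e.symm_apply_apply v
      · ext
        exact e.apply_symm_apply _
    infer_instance


lemma conj_unit_val [Finite H] (φ : H →* ℂˣ) (n : H) :
    (starRingEnd ℂ) (φ n : ℂ) = ((φ n)⁻¹ : ℂˣ) := by
  have hpow : ((φ n : ℂ)) ^ (Nat.card H) = 1 := by
    rw [← Units.val_pow_eq_pow_val, ← map_pow, pow_card_eq_one', map_one, Units.val_one]
  have hcard : (Nat.card H) ≠ 0 := Nat.card_pos.ne'
  have hn : ‖(φ n : ℂ)‖ = 1 := Complex.norm_eq_one_of_pow_eq_one hpow hcard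
  rw [← Complex.inv_eq_conj hn]
  exact (Units.val_inv_eq_inv_val _).symm

lemma mul_conj_unit [Finite H] (φ : H →* ℂˣ) (n : H) :
    (φ n : ℂ) * (starRingEnd ℂ) (φ n : ℂ) = 1 := by
  rw [conj_unit_val φ n, ← Units.val_mul, mul_inv_cancel, Units.val_one]

lemma crux {G : Type} [Group G] [Finite G] (N : Subgroup G) [hN : N.Normal]
    (φ : ↥N →* ℂˣ)
    (hinv : ∀ (g : G) (n : ↥N), φ ⟨g⁻¹ * ↑n * g, hN.conj_mem' ↑n n.2 g⟩ = φ n)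
    (V : FDRep ℂ G) [Simple V]
    (hne : charInner ↥N (fun n : ↥N => V.character ↑n) (fun n => (φ n : ℂ)) ≠ 0) :
    ∀ n : ↥N, V.ρ ↑n = (φ n : ℂ) • (LinearMap.id : (V : Type) →ₗ[ℂ] (V : Type)) := by
  letI : Fintype ↥N := Fintype.ofFinite _
  classical
  -- the averaging operator
  set P : (V : Type) →ₗ[ℂ] (V : Type) :=
    ∑ n : ↥N, (starRingEnd ℂ) (φ n : ℂ) • V.ρ (n : G) with hP
  -- conjugation equivalence
  have conjmem : ∀ (g : G) (n : ↥N), g * ↑n * g⁻¹ ∈ N := by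
    intro g n
    simpa using hN.conj_mem' ↑n n.2 g⁻¹
  have hinv' : ∀ (g : G) (n : ↥N), φ ⟨g * ↑n * g⁻¹, conjmem g n⟩ = φ n := by
    intro g n
    have := hinv g ⟨g * ↑n * g⁻¹, conjmem g n⟩
    simp only at this
    rw [← this]
    congr 1
    ext
    simp [mul_assoc]
  -- P commutes with the G-action
  have hPcomm : ∀ g : G, V.ρ g * P = P * V.ρ g := by
    intro g
    let e : ↥N ≃ ↥N :=
      { toFun := fun n => ⟨g * ↑n * g⁻¹, conjmem g n⟩
        invFun := fun n => ⟨g⁻¹ * ↑n * g, hN.conj_mem' ↑n n.2 g⟩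
        left_inv := fun n => by ext; simp [mul_assoc]
        right_inv := fun n => by ext; simp [mul_assoc] }
    rw [hP, Finset.mul_sum, Finset.sum_mul]
    refine Fintype.sum_equiv e _ _ ?_
    intro n
    simp only [e, Equiv.coe_fn_mk]
    rw [mul_smul_comm, smul_mul_assoc, ← map_mul, ← map_mul, hinv' g n]
    congr 2
    show g * ↑n = (g * ↑n * g⁻¹) * g
    group
  -- ρ m * P = φ m • P for m in N
  have hmul : ∀ m : ↥N, V.ρ (m : G) * P = (φ m : ℂ) • P := by
    intro m
    rw [hP, Finset.mul_sum, Finset.smul_sum]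
    refine Fintype.sum_equiv (Equiv.mulLeft m) _ _ ?_
    intro n
    rw [mul_smul_comm, ← map_mul, smul_smul]
    have hc : (φ m : ℂ) * (starRingEnd ℂ) (φ (m * n) : ℂ)
        = (starRingEnd ℂ) (φ n : ℂ) := by
      rw [map_mul φ, Units.val_mul, map_mul]
      rw [conj_unit_val φ m]
      rw [← mul_assoc, ← Units.val_mul, mul_inv_cancel, Units.val_one, one_mul]
    rw [← hc]
    rfl
  -- P as a morphism of representations
  let Pmor : V ⟶ V := ⟨FGModuleCat.ofHom P, fun g => by ext v; exact LinearMap.congr_fun (hPcomm g).symm v⟩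
  obtain ⟨c, hc⟩ := endomorphism_simple_eq_smul_id (𝕜 := ℂ) Pmor
  have hPc : P = c • (LinearMap.id : (V : Type) →ₗ[ℂ] (V : Type)) := by
    have h1 : (c • (𝟙 V : V ⟶ V)).hom.hom.hom = Pmor.hom.hom.hom := congrArg (fun k => k.hom.hom.hom) hc
    have h2 : ((c • (𝟙 V : V ⟶ V)).hom.hom.hom : (V : Type) →ₗ[ℂ] (V : Type))
        = c • (LinearMap.id : (V : Type) →ₗ[ℂ] (V : Type)) := rfl
    exact h1.symm.trans h2
  have hcne : c ≠ 0 := by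
    intro h0
    apply hne
    have hS : ∑ n : ↥N, V.character ↑n * (starRingEnd ℂ) (φ n : ℂ) = 0 := by
      have ht : LinearMap.trace ℂ V P
          = ∑ n : ↥N, V.character ↑n * (starRingEnd ℂ) (φ n : ℂ) := by
        rw [hP, map_sum]
        refine Finset.sum_congr rfl fun n _ => ?_
        rw [map_smul, smul_eq_mul, mul_comm]
        rfl
      rw [hPc, h0, zero_smul, map_zero] at ht
      exact ht.symm
      -- done
    rw [charInner_eq_sum, hS, mul_zero]
  intro m
  have h3 := hmul m
  rw [hPc] at h3
  have h4 : V.ρ (m : G) * (c • LinearMap.id) = c • V.ρ (m : G) := by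
    rw [mul_smul_comm]
    congr 1
  rw [h4] at h3
  have h5 : c • V.ρ (m : G) = c • ((φ m : ℂ) • (LinearMap.id : (V : Type) →ₗ[ℂ] (V : Type))) := by
    rw [h3, smul_comm]
  exact smul_right_injective _ hcne h5
lemma endo_exists_smul {W : Type} [AddCommGroup W] [Module ℂ W]
    (h : Module.finrank ℂ W = 1) (f : W →ₗ[ℂ] W) :
    ∃ a : ℂ, f = a • (LinearMap.id : W →ₗ[ℂ] W) := by
  haveI : FiniteDimensional ℂ W := FiniteDimensional.of_finrank_eq_succ h
  haveI : Nontrivial W := Module.nontrivial_of_finrank_pos (R := ℂ) (h ▸ Nat.one_pos)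
  obtain ⟨v, hv⟩ := exists_ne (0 : W)
  have hspan := (finrank_eq_one_iff_of_nonzero' v hv).mp h
  obtain ⟨a, ha⟩ := hspan (f v)
  refine ⟨a, ?_⟩
  ext w
  obtain ⟨t, rfl⟩ := hspan w
  simp only [map_smul, LinearMap.smul_apply, LinearMap.id_apply]
  rw [← ha, smul_comm]

lemma char_mul_of_finrank_one {G : Type} [Group G] (V : FDRep ℂ G)
    (h : Module.finrank ℂ (V : Type) = 1) (a b : G) :
    V.character (a * b) = V.character a * V.character b := by
  obtain ⟨x, hx⟩ := endo_exists_smul h (V.ρ a)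
  obtain ⟨y, hy⟩ := endo_exists_smul h (V.ρ b)
  have hxy : V.ρ (a * b) = (x * y) • (LinearMap.id : (V:Type) →ₗ[ℂ] (V:Type)) := by
    rw [map_mul, hx, hy, smul_mul_assoc, mul_smul_comm, smul_smul]
    rfl
  have htr : ∀ (z : ℂ), LinearMap.trace ℂ (V : Type)
      (z • (LinearMap.id : (V:Type) →ₗ[ℂ] (V:Type))) = z := by
    intro z
    rw [map_smul, LinearMap.trace_id, h, Nat.cast_one, smul_eq_mul, mul_one]
  show LinearMap.trace ℂ _ (V.ρ (a * b)) = _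
  rw [hxy, htr]
  show _ = LinearMap.trace ℂ _ (V.ρ a) * LinearMap.trace ℂ _ (V.ρ b)
  rw [hx, hy, htr, htr]

end

/-- If G' is abelian and [G',G] ⊊ G', then G is not pseudo-unramified over G':
there is a G-invariant linear character μ of G' such that no irreducible
character of G lying over μ restricts to G' multiplicity-freely. -/
theorem stmt_14 {G : Type} [Group G] [Finite G]
    (hab : ∀ a b : ↥(commutator G), a * b = b * a)
    (hne : ⁅commutator G, (⊤ : Subgroup G)⁆ < commutator G) :
    ∃ μ : ↥(commutator G) → ℂ, IsIrrChar ↥(commutator G) μ ∧ μ 1 = 1 ∧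
      (∀ g : G, conjChar (commutator G) g μ = μ) ∧
      ∀ χ : G → ℂ, IsIrrChar G χ →
        charInner ↥(commutator G) (fun n : commutator G => χ n) μ ≠ 0 →
        ¬ MultFree ↥(commutator G) (fun n : commutator G => χ n) := by
  classical
  set N : Subgroup G := commutator G with hNdef
  haveI hN : N.Normal := Subgroup.commutator_normal ⊤ ⊤
  letI : CommGroup ↥N := { (inferInstance : Group ↥N) with mul_comm := hab }
  let K : Subgroup ↥N := (⁅commutator G, (⊤ : Subgroup G)⁆).subgroupOf N
  haveI : K.Normal := inferInstance
  obtain ⟨x, hxN, hxK⟩ := SetLike.exists_of_lt hne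
  let a : ↥N := ⟨x, hxN⟩
  have haK : a ∉ K := by
    simpa [K, Subgroup.mem_subgroupOf] using hxK
  have haQ : (QuotientGroup.mk a : ↥N ⧸ K) ≠ 1 := by
    rw [Ne, QuotientGroup.eq_one_iff]
    exact haK
  obtain ⟨φQ, hφQ⟩ := CommGroup.exists_apply_ne_one_of_hasEnoughRootsOfUnity (↥N ⧸ K) ℂ haQ
  let φ : ↥N →* ℂˣ := φQ.comp (QuotientGroup.mk' K)
  have hφa : φ a ≠ 1 := hφQ
  have hφK : ∀ c : ↥N, (c : G) ∈ ⁅commutator G, (⊤ : Subgroup G)⁆ → φ c = 1 := by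
    intro c hc
    have h1 : (QuotientGroup.mk c : ↥N ⧸ K) = 1 :=
      (QuotientGroup.eq_one_iff _).mpr (by simpa [K, Subgroup.mem_subgroupOf] using hc)
    show φQ (QuotientGroup.mk c) = 1
    rw [h1, map_one]
  have hle : ⁅commutator G, (⊤ : Subgroup G)⁆ ≤ N := hne.le
  have hinv : ∀ (g : G) (n : ↥N), φ ⟨g⁻¹ * ↑n * g, hN.conj_mem' ↑n n.2 g⟩ = φ n := by
    intro g n
    have hmem : ((↑n)⁻¹ * g⁻¹ * ↑n * g : G) ∈ N := by
      apply hle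
      have : ((↑n)⁻¹ * g⁻¹ * ↑n * g : G) = (open scoped commutatorElement in ⁅((↑n)⁻¹ : G), g⁻¹⁆) := by
        simp [commutatorElement_def, mul_assoc]
      rw [this]
      exact Subgroup.commutator_mem_commutator (Subgroup.inv_mem _ n.2) (Subgroup.mem_top _)
    have hsplit : (⟨g⁻¹ * ↑n * g, hN.conj_mem' ↑n n.2 g⟩ : ↥N) = n * ⟨_, hmem⟩ := by
      ext
      simp [mul_assoc]
    rw [hsplit, map_mul, hφK ⟨_, hmem⟩ (by
      have : ((↑n)⁻¹ * g⁻¹ * ↑n * g : G) = (open scoped commutatorElement in ⁅((↑n)⁻¹ : G), g⁻¹⁆) := by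
        simp [commutatorElement_def, mul_assoc]
      show ((↑n)⁻¹ * g⁻¹ * ↑n * g : G) ∈ _
      rw [this]
      exact Subgroup.commutator_mem_commutator (Subgroup.inv_mem _ n.2) (Subgroup.mem_top _)),
      mul_one]
  refine ⟨fun n => (φ n : ℂ), ⟨oneFDRep φ, oneFDRep_simple φ, funext (oneFDRep_char φ)⟩,
    by simp, ?_, ?_⟩
  · intro g
    funext n
    exact congrArg (fun u : ℂˣ => (u : ℂ)) (hinv g n)
  · intro χ hχ hip hMF
    obtain ⟨V, hV, hVchar⟩ := hχ
    haveI := hV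
    subst hVchar
    have hρ := crux N φ hinv V hip
    have hchar : ∀ n : ↥N, V.character ↑n = (φ n : ℂ) * (Module.finrank ℂ (V : Type) : ℂ) := by
      intro n
      show LinearMap.trace ℂ _ (V.ρ ↑n) = _
      rw [hρ n, map_smul, LinearMap.trace_id, smul_eq_mul]
    letI : Fintype ↥N := Fintype.ofFinite _
    have hcardne : ((Fintype.card ↥N : ℂ)) ≠ 0 := by
      exact_mod_cast Nat.cast_ne_zero.mpr Fintype.card_ne_zero
    have hipval : charInner ↥N (fun n : ↥N => V.character ↑n) (fun n => (φ n : ℂ))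
        = (Module.finrank ℂ (V : Type) : ℂ) := by
      rw [charInner_eq_sum]
      have hterm : ∀ n : ↥N, V.character ↑n * (starRingEnd ℂ) ((φ n : ℂ))
          = (Module.finrank ℂ (V : Type) : ℂ) := by
        intro n
        rw [hchar n]
        have h2 := mul_conj_unit φ n
        calc (φ n : ℂ) * (Module.finrank ℂ (V : Type) : ℂ) * (starRingEnd ℂ) ((φ n : ℂ))
            = ((φ n : ℂ) * (starRingEnd ℂ) ((φ n : ℂ))) * (Module.finrank ℂ (V : Type) : ℂ) := by
              ring
          _ = (Module.finrank ℂ (V : Type) : ℂ) := by rw [h2, one_mul]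
      rw [Finset.sum_congr rfl (fun n _ => hterm n), Finset.sum_const, Finset.card_univ,
        nsmul_eq_mul, ← mul_assoc, inv_mul_cancel₀ hcardne, one_mul]
    have hMF' := hMF (fun n => (φ n : ℂ))
      ⟨oneFDRep φ, oneFDRep_simple φ, funext (oneFDRep_char φ)⟩
    rw [hipval] at hMF' hip
    have hd : Module.finrank ℂ (V : Type) = 1 := by
      rcases hMF' with h | h
      · exact absurd h hip
      · exact_mod_cast h
    -- the character is multiplicative, hence trivial on the commutator subgroup
    have hone : V.character 1 = 1 := by
      rw [FDRep.char_one, hd, Nat.cast_one]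
    have hker : ∀ y : G, y ∈ commutator G → V.character y = 1 := by
      intro y hy
      rw [commutator_eq_closure] at hy
      induction hy using Subgroup.closure_induction with
      | mem z hz =>
        obtain ⟨g₁, g₂, rfl⟩ := hz
        have h1 : V.character g₁ * V.character g₁⁻¹ = 1 := by
          rw [← char_mul_of_finrank_one V hd, mul_inv_cancel, hone]
        have h2 : V.character g₂ * V.character g₂⁻¹ = 1 := by
          rw [← char_mul_of_finrank_one V hd, mul_inv_cancel, hone]
        rw [commutatorElement_def, char_mul_of_finrank_one V hd,
          char_mul_of_finrank_one V hd, char_mul_of_finrank_one V hd]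
        calc V.character g₁ * V.character g₂ * V.character g₁⁻¹ * V.character g₂⁻¹
            = (V.character g₁ * V.character g₁⁻¹) * (V.character g₂ * V.character g₂⁻¹) := by
              ring
          _ = 1 := by rw [h1, h2, one_mul]
      | one => exact hone
      | mul u v hu hv ihu ihv =>
        rw [char_mul_of_finrank_one V hd, ihu, ihv, one_mul]
      | inv u hu ihu =>
        have : V.character u * V.character u⁻¹ = 1 := by
          rw [← char_mul_of_finrank_one V hd, mul_inv_cancel, hone]
        rw [ihu, one_mul] at this
        exact this
    have hfin : (φ a : ℂ) = 1 := by
      have h1 : V.character ↑a = 1 := hker ↑a a.2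
      rw [hchar a, hd, Nat.cast_one, mul_one] at h1
      exact h1
    exact hφa (Units.ext hfin)
end

section
/- Let N be an abelian normal subgroup of a finite group G with cyclic quotient G/N. Then G is unramified over N: every irreducible complex character of G restricts to N as a multiplicity-free character or a multiple of the trivial character. -/
open scoped BigOperators

open CategoryTheory

section AuxLemmas

lemma char_hom {H : GrpCat.{0}} [Finite ↑H] (hc : ∀ a b : ↑H, a * b = b * a)
    {μ : ↑H → ℂ} (hμ : IsIrrChar ↑H μ) :
    μ 1 = 1 ∧ ∀ a b : ↑H, μ (a * b) = μ a * μ b := by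
  classical
  obtain ⟨σ, hs, hchar⟩ := hμ
  haveI := hs
  haveI : Fintype ↑H := Fintype.ofFinite ↑H
  haveI : Invertible ((Fintype.card ↑H : ℂ)) :=
    invertibleOfNonzero (by exact_mod_cast Fintype.card_ne_zero)
  set d : ℕ := Module.finrank ℂ σ with hd
  have hscal : ∀ n : ↑H, ∃ c : ℂ, (σ.ρ n : σ →ₗ[ℂ] σ) = c • (1 : σ →ₗ[ℂ] σ) := by
    intro n
    have hfr : Module.finrank ℂ (σ ⟶ σ) = 1 := by
      rw [FDRep.finrank_hom_simple_simple σ σ, if_pos ⟨Iso.refl σ⟩]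
    have hid : (𝟙 σ : σ ⟶ σ) ≠ 0 := id_nonzero σ
    have hspan : Submodule.span ℂ {(𝟙 σ : σ ⟶ σ)} = ⊤ := by
      apply Submodule.eq_top_of_finrank_eq
      rw [finrank_span_singleton hid, hfr]
    set e : σ ⟶ σ := Action.Hom.mk (FGModuleCat.ofHom (σ.ρ n))
      (by intro m; ext v; show σ.ρ n (σ.ρ m v) = σ.ρ m (σ.ρ n v); rw [← Module.End.mul_apply, ← map_mul, hc, map_mul, Module.End.mul_apply])
      with he
    have hmem : e ∈ Submodule.span ℂ {(𝟙 σ : σ ⟶ σ)} := hspan ▸ Submodule.mem_top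
    obtain ⟨cc, hcc⟩ := Submodule.mem_span_singleton.mp hmem
    refine ⟨cc, ?_⟩
    have : (e.hom.hom.hom : σ →ₗ[ℂ] σ) = cc • (1 : σ →ₗ[ℂ] σ) := by rw [← hcc]; rfl
    exact this
  choose c hcs using hscal
  have htr : ∀ (x : ℂ), LinearMap.trace ℂ σ (x • (1 : σ →ₗ[ℂ] σ)) = x * d := by
    intro x
    rw [map_smul, LinearMap.trace_one, smul_eq_mul]
  have hμc : ∀ n : ↑H, μ n = c n * d := by
    intro n
    rw [← hchar]
    show LinearMap.trace ℂ σ (σ.ρ n) = c n * d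
    rw [hcs n, htr]
  have hccd : ∀ g : ↑H, (c g * c g⁻¹) * d = (d : ℂ) := by
    intro g
    have h1 : (σ.ρ g : σ →ₗ[ℂ] σ) * σ.ρ g⁻¹ = 1 := by
      rw [← map_mul, mul_inv_cancel, map_one]
    rw [hcs g, hcs g⁻¹, smul_mul_smul_comm, one_mul] at h1
    have := congrArg (LinearMap.trace ℂ σ) h1
    rw [htr, LinearMap.trace_one] at this
    simpa using this
  have hprod : ∀ g : ↑H, μ g * μ g⁻¹ = (d : ℂ) * d := by
    intro g
    rw [hμc g, hμc g⁻¹]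
    calc c g * ↑d * (c g⁻¹ * ↑d) = ((c g * c g⁻¹) * d) * d := by ring
    _ = (d : ℂ) * d := by rw [hccd g]
  have key := FDRep.char_orthonormal (k := ℂ) (G := H) σ σ
  rw [if_pos ⟨Iso.refl σ⟩] at key
  have hsum : (∑ g : ↑H, σ.character g * σ.character g⁻¹) = (Fintype.card ↑H : ℂ) * (d * d) := by
    rw [hchar]
    rw [Finset.sum_congr rfl (fun g _ => hprod g)]
    simp [Finset.sum_const, Finset.card_univ, nsmul_eq_mul]
  rw [hsum] at key
  rw [Nat.card_eq_fintype_card, inv_mul_cancel_left₀ (by exact_mod_cast Fintype.card_ne_zero)] at key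
  have hd1 : d = 1 := by
    have : (d * d : ℕ) = 1 := by exact_mod_cast key
    exact Nat.eq_one_of_mul_eq_one_right (by rw [this])
  constructor
  · rw [← hchar, FDRep.char_one, ← hd, hd1]; norm_num
  · intro a b
    have hmul : (σ.ρ (a * b) : σ →ₗ[ℂ] σ) = σ.ρ a * σ.ρ b := by rw [map_mul]
    rw [hcs (a*b), hcs a, hcs b, smul_mul_smul_comm, one_mul] at hmul
    have := congrArg (LinearMap.trace ℂ σ) hmul
    rw [htr, htr] at this
    rw [hμc (a*b), hμc a, hμc b, hd1] at *
    push_cast at this ⊢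
    rw [mul_one] at this ⊢
    rw [this]; ring

lemma char_pow' {H : Type} [Group H] {μ : H → ℂ} (h1 : μ 1 = 1)
    (hm : ∀ a b : H, μ (a * b) = μ a * μ b) (x : H) (k : ℕ) : μ (x ^ k) = μ x ^ k := by
  induction k with
  | zero => simpa using h1
  | succ k ih => rw [pow_succ, pow_succ, hm, ih]

lemma char_unit {H : Type} [Group H] [Finite H] {μ : H → ℂ} (h1 : μ 1 = 1)
    (hm : ∀ a b : H, μ (a * b) = μ a * μ b) (x : H) :
    μ x * μ x⁻¹ = 1 ∧ (starRingEnd ℂ) (μ x) = μ x⁻¹ := by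
  have hinv : μ x * μ x⁻¹ = 1 := by rw [← hm, mul_inv_cancel, h1]
  have hpow : μ x ^ orderOf x = 1 := by rw [← char_pow' h1 hm, pow_orderOf_eq_one, h1]
  have hnorm : ‖μ x‖ = 1 := Complex.norm_eq_one_of_pow_eq_one hpow (orderOf_pos x).ne'
  have hconj : (starRingEnd ℂ) (μ x) = (μ x)⁻¹ := (Complex.inv_eq_conj hnorm).symm
  have hmx : (μ x)⁻¹ = μ x⁻¹ := inv_eq_of_mul_eq_one_right hinv
  exact ⟨hinv, by rw [hconj, hmx]⟩

lemma invariant_top {G : Type} [Group G] (ρV : FDRep ℂ G) [Simple ρV]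
    (U : Submodule ℂ ρV) (hne : U ≠ ⊥)
    (hinv : ∀ (x : G), ∀ u ∈ U, ρV.ρ x u ∈ U) : U = ⊤ := by
  classical
  let ρU : Representation ℂ G U :=
    { toFun := fun x => (ρV.ρ x).restrict (fun u hu => hinv x u hu)
      map_one' := by ext u; simp [LinearMap.restrict_apply]
      map_mul' := by intro a b; ext u; simp [LinearMap.restrict_apply, Module.End.mul_apply] }
  let Y : FDRep ℂ G := FDRep.of ρU
  let f : Y ⟶ ρV := Action.Hom.mk (FGModuleCat.ofHom U.subtype) (by
    intro x
    ext u
    show U.subtype (ρU x u) = ρV.ρ x (U.subtype u)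
    simp [ρU, LinearMap.restrict_apply])
  haveI : Mono f := by
    apply ConcreteCategory.mono_of_injective
    exact Subtype.val_injective
  have hf : f ≠ 0 := by
    obtain ⟨u0, hu0U, hu0⟩ := Submodule.exists_mem_ne_zero_of_ne_bot hne
    intro h
    have : (f.hom.hom.hom : Y →ₗ[ℂ] ρV) ⟨u0, hu0U⟩ = 0 := by rw [h]; rfl
    exact hu0 this
  haveI : IsIso f := (Simple.mono_isIso_iff_nonzero f).mpr hf
  have hsurj : ∀ v : ρV, v ∈ U := by
    intro v
    have hcomp : (inv f ≫ f) = 𝟙 ρV := IsIso.inv_hom_id f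
    have : (f.hom.hom.hom : Y →ₗ[ℂ] ρV) ((inv f).hom.hom.hom v) = v := by
      have := congrArg (fun φ => φ.hom.hom.hom) hcomp
      exact congrFun (congrArg (fun (l : ρV →ₗ[ℂ] ρV) => (l : ρV → ρV)) this) v
    rw [← this]
    exact ((inv f).hom.hom.hom v).2
  exact Submodule.eq_top_iff'.mpr hsurj

/-- The μ-eigenspace of the restriction to N. -/
noncomputable def eigSub {G : Type} [Group G] (N : Subgroup G) (ρV : FDRep ℂ G)
    (μ : ↥N → ℂ) : Submodule ℂ ρV where
  carrier := {v | ∀ n : ↥N, ρV.ρ ↑n v = μ n • v}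
  add_mem' := fun ha hb n => by rw [map_add, ha n, hb n, smul_add]
  zero_mem' := fun n => by rw [map_zero, smul_zero]
  smul_mem' := fun c v hv => by intro n; rw [map_smul, hv n, smul_comm]

lemma mem_eigSub {G : Type} [Group G] {N : Subgroup G} {ρV : FDRep ℂ G} {μ : ↥N → ℂ}
    {v : ρV} : v ∈ eigSub N ρV μ ↔ ∀ n : ↥N, ρV.ρ ↑n v = μ n • v := Iff.rfl

lemma proj_lemma {G : Type} [Group G] [Finite G] (N : Subgroup G) {μ : ↥N → ℂ}
    (h1 : μ 1 = 1) (hm : ∀ a b : ↥N, μ (a * b) = μ a * μ b) (ρV : FDRep ℂ G) :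
    ∃ P : ρV →ₗ[ℂ] ρV, LinearMap.IsProj (eigSub N ρV μ) P ∧
      charInner ↥N (fun n : ↥N => ρV.character ↑n) μ = LinearMap.trace ℂ ρV P ∧
      ∀ (v : ρV) (ν : ↥N → ℂ), (∀ n : ↥N, ρV.ρ ↑n v = ν n • v) →
        (∀ a b : ↥N, ν (a * b) = ν a * ν b) → (∃ n0, ν n0 ≠ μ n0) → P v = 0 := by
  classical
  letI : Fintype ↥N := Fintype.ofFinite ↥N
  set c : ℂ := (Nat.card ↥N : ℂ) with hc
  have hcard : c = (Fintype.card ↥N : ℂ) := by rw [hc, Nat.card_eq_fintype_card]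
  have hc0 : c ≠ 0 := by
    rw [hcard]
    exact_mod_cast Fintype.card_ne_zero
  set P : ρV →ₗ[ℂ] ρV := c⁻¹ • ∑ n : ↥N, (starRingEnd ℂ) (μ n) • ρV.ρ ↑n with hP
  have hPapp : ∀ v : ρV, P v = c⁻¹ • ∑ n : ↥N, (starRingEnd ℂ) (μ n) • ρV.ρ ↑n v := by
    intro v
    rw [hP]
    simp [LinearMap.sum_apply]
  have hmuinv : ∀ n : ↥N, (starRingEnd ℂ) (μ n) * μ n = 1 := by
    intro n
    rw [(char_unit h1 hm n).2, ← hm, inv_mul_cancel, h1]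
  have key : ∀ (v : ρV) (ν : ↥N → ℂ), (∀ n : ↥N, ρV.ρ ↑n v = ν n • v) →
      P v = (c⁻¹ * ∑ n : ↥N, (starRingEnd ℂ) (μ n) * ν n) • v := by
    intro v ν hv
    rw [hPapp]
    have : ∀ n : ↥N, (starRingEnd ℂ) (μ n) • ρV.ρ ↑n v = ((starRingEnd ℂ) (μ n) * ν n) • v := by
      intro n
      rw [hv n, smul_smul]
    rw [Finset.sum_congr rfl (fun n _ => this n), ← Finset.sum_smul, smul_smul]
  have hfix : ∀ v ∈ eigSub N ρV μ, P v = v := by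
    intro v hv
    rw [key v μ hv]
    have : ∑ n : ↥N, (starRingEnd ℂ) (μ n) * μ n = c := by
      rw [Finset.sum_congr rfl (fun n _ => hmuinv n)]
      simp [hcard]
    rw [this, inv_mul_cancel₀ hc0, one_smul]
  refine ⟨P, ⟨?_, hfix⟩, ?_, ?_⟩
  · intro v
    rw [mem_eigSub]
    intro m
    rw [hPapp, map_smul, map_sum]
    have step1 : ∀ n : ↥N, ρV.ρ ↑m ((starRingEnd ℂ) (μ n) • ρV.ρ ↑n v)
        = (starRingEnd ℂ) (μ n) • ρV.ρ ↑(m * n) v := by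
      intro n
      rw [map_smul]
      congr 1
      rw [Subgroup.coe_mul, map_mul, Module.End.mul_apply]
    rw [Finset.sum_congr rfl (fun n _ => step1 n)]
    have step2 : ∑ n : ↥N, (starRingEnd ℂ) (μ n) • ρV.ρ ↑(m * n) v
        = ∑ n : ↥N, (starRingEnd ℂ) (μ (m⁻¹ * n)) • ρV.ρ ↑n v := by
      refine Fintype.sum_equiv (Equiv.mulLeft m) _ _ ?_
      intro n
      simp only [Equiv.coe_mulLeft]
      rw [inv_mul_cancel_left]
    rw [step2]
    have step3 : ∀ n : ↥N, (starRingEnd ℂ) (μ (m⁻¹ * n)) • ρV.ρ ↑n v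
        = μ m • ((starRingEnd ℂ) (μ n) • ρV.ρ ↑n v) := by
      intro n
      rw [hm, map_mul, (char_unit h1 hm m⁻¹).2, inv_inv, smul_smul]
    rw [Finset.sum_congr rfl (fun n _ => step3 n), ← Finset.smul_sum, smul_comm]
  · unfold charInner
    rw [finsum_eq_sum_of_fintype, hP]
    rw [map_smul, map_sum]
    have : ∀ n : ↥N, LinearMap.trace ℂ ρV ((starRingEnd ℂ) (μ n) • ρV.ρ ↑n)
        = ρV.character ↑n * (starRingEnd ℂ) (μ n) := by
      intro n
      rw [map_smul, smul_eq_mul, mul_comm]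
      rfl
    rw [Finset.sum_congr rfl (fun n _ => this n), smul_eq_mul, ← hc]
  · intro v ν hv hmul ⟨n0, hn0⟩
    rw [key v ν hv]
    set τ : ↥N → ℂ := fun n => (starRingEnd ℂ) (μ n) * ν n with hτ
    have hτmul : ∀ a b : ↥N, τ (a * b) = τ a * τ b := by
      intro a b
      rw [hτ]
      simp only
      rw [hm, hmul, map_mul]
      ring
    have hτn0 : τ n0 ≠ 1 := by
      intro h
      apply hn0
      have h2 := hmuinv n0
      have hne : (starRingEnd ℂ) (μ n0) ≠ 0 := left_ne_zero_of_mul_eq_one h2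
      exact mul_left_cancel₀ hne (h.trans h2.symm)
    have hshift : τ n0 * ∑ n : ↥N, τ n = ∑ n : ↥N, τ n := by
      rw [Finset.mul_sum]
      refine Fintype.sum_equiv (Equiv.mulLeft n0) _ _ ?_
      intro n
      rw [Equiv.coe_mulLeft, ← hτmul]
    have hS : ∑ n : ↥N, τ n = 0 := by
      by_contra hS
      exact hτn0 (mul_right_cancel₀ hS (by rw [hshift, one_mul]))
    rw [hS, mul_zero, zero_smul]

lemma conj_eig {G : Type} [Group G] (N : Subgroup G) [hN : N.Normal] (ρV : FDRep ℂ G)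
    (μ : ↥N → ℂ) (x : G) (v : ρV) (hv : ∀ n : ↥N, ρV.ρ ↑n v = μ n • v) :
    ∀ n : ↥N, ρV.ρ ↑n (ρV.ρ x v) = conjChar N x μ n • ρV.ρ x v := by
  intro n
  have hxn : (↑n : G) * x = x * (x⁻¹ * ↑n * x) := by group
  have h2 : ρV.ρ ↑n (ρV.ρ x v) = ρV.ρ ((↑n : G) * x) v := by
    rw [map_mul, Module.End.mul_apply]
  rw [h2, hxn, map_mul, Module.End.mul_apply]
  have h3 : ρV.ρ (x⁻¹ * ↑n * x) v = μ ⟨x⁻¹ * ↑n * x, hN.conj_mem' ↑n n.2 x⟩ • v :=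
    hv ⟨x⁻¹ * ↑n * x, hN.conj_mem' ↑n n.2 x⟩
  rw [h3, map_smul]
  rfl

lemma conjChar_hom {G : Type} [Group G] (N : Subgroup G) [hN : N.Normal] {μ : ↥N → ℂ}
    (hm : ∀ a b : ↥N, μ (a * b) = μ a * μ b) (x : G) :
    ∀ a b : ↥N, conjChar N x μ (a * b) = conjChar N x μ a * conjChar N x μ b := by
  intro a b
  unfold conjChar
  rw [← hm]
  congr 1
  ext
  show x⁻¹ * ↑(a * b) * x = (x⁻¹ * ↑a * x) * (x⁻¹ * ↑b * x)
  rw [Subgroup.coe_mul]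
  group

lemma decomp_lemma {G : Type} [Group G] [Finite G] (N : Subgroup G) [N.Normal] (g : G)
    (hg : ∀ x : G ⧸ N, x ∈ Subgroup.zpowers ((g : G) : G ⧸ N)) (x : G) :
    ∃ (j : ℕ) (n : ↥N), x = g ^ j * ↑n := by
  obtain ⟨z, hz⟩ := hg (↑x)
  have hmk : ((g ^ z : G) : G ⧸ N) = (↑x : G ⧸ N) := by
    rw [← hz]
    rfl
  have hmem : (g ^ z)⁻¹ * x ∈ N := QuotientGroup.eq.mp hmk
  set o := orderOf g with ho
  have hopos : 0 < o := orderOf_pos g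
  have h0 : (0 : ℤ) ≤ z % (o : ℤ) := Int.emod_nonneg z (by exact_mod_cast hopos.ne')
  set j : ℕ := (z % (o : ℤ)).toNat with hj
  have hgj : g ^ j = g ^ z := by
    have : ((j : ℤ)) = z % (o : ℤ) := by rw [hj, Int.toNat_of_nonneg h0]
    calc g ^ j = g ^ ((j : ℤ)) := (zpow_natCast g j).symm
    _ = g ^ (z % (o : ℤ)) := by rw [this]
    _ = g ^ z := by rw [ho, zpow_mod_orderOf]
  refine ⟨j, ⟨(g ^ z)⁻¹ * x, hmem⟩, ?_⟩
  rw [hgj]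
  simp

lemma eig_finrank_le_one {G : Type} [Group G] [Finite G] (N : Subgroup G) [hN : N.Normal]
    {μ : ↥N → ℂ} (h1 : μ 1 = 1) (hm : ∀ a b : ↥N, μ (a * b) = μ a * μ b)
    (hcyc : IsCyclic (G ⧸ N)) (ρV : FDRep ℂ G) [Simple ρV] :
    Module.finrank ℂ (eigSub N ρV μ) ≤ 1 := by
  classical
  by_cases hbot : eigSub N ρV μ = ⊥
  · rw [hbot, finrank_bot]
    norm_num
  set W := eigSub N ρV μ with hW
  obtain ⟨q, hq⟩ := hcyc.exists_generator
  obtain ⟨g, hgq⟩ := QuotientGroup.mk'_surjective N q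
  have hgen : ∀ x : G ⧸ N, x ∈ Subgroup.zpowers ((g : G) : G ⧸ N) := by
    intro x
    have : ((g : G) : G ⧸ N) = q := hgq
    rw [this]
    exact hq x
  set I := inertia N μ with hI
  have hIg : ∀ x : G, x ∈ I ↔ (∀ n : ↥N, conjChar N x μ n = μ n) := by
    intro x
    constructor
    · intro h n
      rw [show conjChar N x μ = μ from h]
    · intro h
      exact funext h
  set o := orderOf g with ho
  have hopos : 0 < o := orderOf_pos g
  have hex : ∃ k, 0 < k ∧ g ^ k ∈ I := by
    refine ⟨o, hopos, ?_⟩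
    rw [ho, pow_orderOf_eq_one]
    exact one_mem I
  set k := Nat.find hex with hk
  obtain ⟨hkpos, hkI⟩ := Nat.find_spec hex
  have hdvd : ∀ j : ℕ, g ^ j ∈ I → k ∣ j := by
    intro j hj
    rcases Nat.eq_zero_or_pos (j % k) with hr | hr
    · exact Nat.dvd_of_mod_eq_zero hr
    · exfalso
      have hrk : j % k < k := Nat.mod_lt _ hkpos
      have hmemr : g ^ (j % k) ∈ I := by
        have hsplit : g ^ j = g ^ (k * (j / k)) * g ^ (j % k) := by
          rw [← pow_add]
          congr 1
          exact (Nat.div_add_mod j k).symm ▸ rfl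
        have hpow : g ^ (k * (j / k)) ∈ I := by
          rw [pow_mul]
          exact pow_mem hkI _
        have hmm := mul_mem (inv_mem hpow) hj
        rwa [hsplit, inv_mul_cancel_left] at hmm
      exact Nat.find_min hex hrk ⟨hr, hmemr⟩
  haveI : Nontrivial ↥W := Submodule.nontrivial_iff_ne_bot.mpr hbot
  have hWmap : ∀ w ∈ W, ρV.ρ (g ^ k) w ∈ W := by
    intro w hw
    rw [hW, mem_eigSub]
    intro n
    rw [conj_eig N ρV μ (g ^ k) w hw n, (hIg _).mp hkI n]
  set A : ↥W →ₗ[ℂ] ↥W := (ρV.ρ (g ^ k)).restrict (fun w hw => hWmap w hw) with hA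
  obtain ⟨lam, hlam⟩ := Module.End.exists_eigenvalue (A : Module.End ℂ ↥W)
  obtain ⟨w0, hw0⟩ := hlam.exists_hasEigenvector
  set w : ρV := (w0 : ρV) with hwdef
  have hwW : w ∈ W := w0.2
  have hwv : ∀ n : ↥N, ρV.ρ ↑n w = μ n • w := hwW
  have hw0ne : w ≠ 0 := fun h => hw0.2 (by
    apply Subtype.ext
    simpa [hwdef] using h)
  have hAw : ρV.ρ (g ^ k) w = lam • w := by
    have h1 := hw0.apply_eq_smul
    have h2 := congrArg (Subtype.val) h1
    rw [hA] at h2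
    simpa [LinearMap.restrict_coe_apply] using h2
  have hAkm : ∀ m : ℕ, ρV.ρ (g ^ (k * m)) w = lam ^ m • w := by
    intro m
    induction m with
    | zero => simp
    | succ m ih =>
      rw [Nat.mul_succ, pow_add, map_mul, Module.End.mul_apply, hAw, map_smul, ih,
        smul_smul, show lam * lam ^ m = lam ^ (m + 1) by rw [pow_succ]; ring]
  set U := Submodule.span ℂ (Set.range fun j : ℕ => ρV.ρ (g ^ j) w) with hU
  have hUinv : ∀ (x : G), ∀ u ∈ U, ρV.ρ x u ∈ U := by
    intro x
    have hle : U ≤ Submodule.comap (ρV.ρ x) U := by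
      rw [hU, Submodule.span_le]
      rintro - ⟨j, rfl⟩
      obtain ⟨i, n, rfl⟩ := decomp_lemma N g hgen x
      simp only [SetLike.mem_coe, Submodule.mem_comap]
      beta_reduce
      have h1 : ρV.ρ (g ^ i * ↑n) (ρV.ρ (g ^ j) w)
          = ρV.ρ (g ^ i) (ρV.ρ ↑n (ρV.ρ (g ^ j) w)) := by
        rw [map_mul, Module.End.mul_apply]
      rw [h1, conj_eig N ρV μ (g ^ j) w hwv n, map_smul]
      have h2 : ρV.ρ (g ^ i) (ρV.ρ (g ^ j) w) = ρV.ρ (g ^ (i + j)) w := by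
        rw [pow_add, map_mul, Module.End.mul_apply]
      rw [h2]
      exact Submodule.smul_mem _ _ (Submodule.subset_span ⟨i + j, rfl⟩)
    intro u hu
    exact hle hu
  have hUne : U ≠ ⊥ := by
    intro h
    apply hw0ne
    have hwU : w ∈ U := by
      apply Submodule.subset_span
      refine ⟨0, ?_⟩
      simp
    rw [h] at hwU
    simpa using hwU
  have hUtop : U = ⊤ := invariant_top ρV U hUne hUinv
  obtain ⟨P, hproj, _, hkill⟩ := proj_lemma N h1 hm ρV
  have hgen_span : ∀ j : ℕ, P (ρV.ρ (g ^ j) w) ∈ (ℂ ∙ w) := by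
    intro j
    by_cases hj : g ^ j ∈ I
    · obtain ⟨m, rfl⟩ := hdvd j hj
      rw [hAkm m, map_smul, hproj.map_id w hwW]
      exact Submodule.smul_mem _ _ (Submodule.mem_span_singleton_self w)
    · have hz : P (ρV.ρ (g ^ j) w) = 0 := by
        refine hkill _ (conjChar N (g ^ j) μ) (conj_eig N ρV μ (g ^ j) w hwv)
          (conjChar_hom N hm (g ^ j)) ?_
        by_contra h
        push_neg at h
        exact hj ((hIg _).mpr h)
      rw [hz]
      exact Submodule.zero_mem _
  have hWle : W ≤ (ℂ ∙ w) := by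
    intro v hv
    have hvU : v ∈ U := hUtop ▸ Submodule.mem_top
    have hPle : U ≤ Submodule.comap P (ℂ ∙ w) := by
      rw [hU, Submodule.span_le]
      rintro - ⟨j, rfl⟩
      exact hgen_span j
    have := hPle hvU
    simp only [Submodule.mem_comap] at this
    rwa [hproj.map_id v hv] at this
  calc Module.finrank ℂ ↥W ≤ Module.finrank ℂ ↥(ℂ ∙ w) := Submodule.finrank_mono hWle
  _ = 1 := finrank_span_singleton hw0ne

end AuxLemmas

/-- If N is an abelian normal subgroup of a finite group G with cyclic quotient
G/N, then G is unramified over N. -/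
theorem stmt_17 {G : Type} [Group G] [Finite G] (N : Subgroup G) [N.Normal]
    (hab : ∀ a b : ↥N, a * b = b * a) (hcyc : IsCyclic (G ⧸ N)) :
    UnramifiedOver G N := by
  classical
  intro χ hχ
  left
  intro μ hμ
  haveI : Finite ↑(GrpCat.of ↥N) := inferInstanceAs (Finite ↥N)
  obtain ⟨h1, hm⟩ := char_hom (H := GrpCat.of ↥N) hab hμ
  obtain ⟨ρV, hsim, hchar⟩ := hχ
  haveI := hsim
  obtain ⟨P, hproj, htr, _⟩ := proj_lemma N h1 hm ρV
  have hle := eig_finrank_le_one N h1 hm hcyc ρV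
  have htrace : LinearMap.trace ℂ ρV P = (Module.finrank ℂ ↥(eigSub N ρV μ) : ℂ) :=
    hproj.trace
  have hval : charInner ↥N (fun n : ↥N => χ ↑n) μ
      = (Module.finrank ℂ ↥(eigSub N ρV μ) : ℂ) := by
    rw [← hchar, htr, htrace]
  rcases Nat.le_one_iff_eq_zero_or_eq_one.mp hle with h | h
  · left
    rw [hval, h]
    norm_num
  · right
    rw [hval, h]
    norm_num
end
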